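/- arXiv:2106.16189 — 4 statements merged into one kernel-verified Lean document; each statement's English description precedes it below -/
import Mathlib

section
/- For all real numbers x, y, s, the following identity of formal power series in the variable z holds: (y·E(xz) − x·E(yz))² · Σ_{n≥0} A_{n+1}(x,y,s)·zⁿ/n! = (y−x)² · E((y+s)z), where for a real number a, E(az) denotes the formal exponential series Σ_{n≥0} aⁿzⁿ/n!. (Equivalently, Σ_{n≥0} A_{n+1}(x,y,s)zⁿ/n! = e^{z(y+s)}·((y−x)/(y·e^{xz} − x·e^{yz}))².) -/
open Finset

/-- The word `π(1)π(2)⋯π(n)` of a permutation, as a function on 0-based positions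
(value `π(i+1)` at position `i`, and `0` outside `{0,…,n-1}`). -/
def permWord {n : ℕ} (π : Equiv.Perm (Fin n)) (i : ℕ) : ℕ :=
  if h : i < n then ((π ⟨i, h⟩ : Fin n) : ℕ) + 1 else 0

/-- Number of descents: indices `i ∈ {1,…,n-1}` with `π(i) > π(i+1)`. -/
def desNum {n : ℕ} (π : Equiv.Perm (Fin n)) : ℕ :=
  ((range (n - 1)).filter fun i => permWord π (i + 1) < permWord π i).card

/-- Number of big ascents: indices `i` with `π(i+1) ≥ π(i) + 2`. -/
def bascNum {n : ℕ} (π : Equiv.Perm (Fin n)) : ℕ :=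
  ((range (n - 1)).filter fun i => permWord π i + 2 ≤ permWord π (i + 1)).card

/-- Number of successions: indices `i` with `π(i+1) = π(i) + 1`. -/
def sucNum {n : ℕ} (π : Equiv.Perm (Fin n)) : ℕ :=
  ((range (n - 1)).filter fun i => permWord π (i + 1) = permWord π i + 1).card

/-- The trivariate Eulerian polynomial `A_n(x,y,s)` evaluated at real numbers. -/
def trivEuler (x y s : ℝ) (n : ℕ) : ℝ :=
  ∑ π : Equiv.Perm (Fin n), x ^ bascNum π * y ^ desNum π * s ^ sucNum π

/-- The formal exponential series `E(az) = Σ_{n≥0} aⁿ zⁿ/n!`. -/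
noncomputable def expPS (a : ℝ) : PowerSeries ℝ :=
  PowerSeries.mk fun n => a ^ n / n.factorial


open Equiv

variable {n : ℕ}

def rhoF (p : Fin (n+1)) (i : Fin (n+1)) : Fin (n+1) :=
  if (i:ℕ) < (p:ℕ) then i else if (i:ℕ) = (p:ℕ) then Fin.last n
    else ⟨(i:ℕ)-1, by omega⟩

lemma rhoF_val (p i : Fin (n+1)) : ((rhoF p i) : ℕ) =
    if (i:ℕ) < (p:ℕ) then (i:ℕ) else if (i:ℕ) = (p:ℕ) then n else (i:ℕ) - 1 := by
  unfold rhoF; split_ifs <;> simp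

lemma rhoF_inj (p : Fin (n+1)) : Function.Injective (rhoF p) := by
  intro i j hij
  have hi := i.isLt; have hj := j.isLt; have hp := p.isLt
  have h2 := congrArg Fin.val hij
  rw [rhoF_val, rhoF_val] at h2
  apply Fin.ext
  split_ifs at h2 <;> omega

noncomputable def rho (p : Fin (n+1)) : Equiv.Perm (Fin (n+1)) :=
  Equiv.ofBijective (rhoF p) ((Finite.injective_iff_bijective).mp (rhoF_inj p))

lemma rho_apply (p i : Fin (n+1)) : rho p i = rhoF p i := rfl

def extF (σ : Equiv.Perm (Fin n)) (i : Fin (n+1)) : Fin (n+1) :=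
  if h : (i:ℕ) < n then (σ ⟨i, h⟩).castSucc else Fin.last n

lemma extF_inj (σ : Equiv.Perm (Fin n)) : Function.Injective (extF σ) := by
  intro i j hij
  unfold extF at hij
  split_ifs at hij with h1 h2 h2
  · have := σ.injective (Fin.castSucc_injective n hij)
    exact Fin.ext (by simpa using this)
  · exact absurd (congrArg Fin.val hij) (by simp; omega)
  · exact absurd (congrArg Fin.val hij) (by simp; omega)
  · have hi := i.isLt; have hj := j.isLt
    exact Fin.ext (by omega)

noncomputable def extP (σ : Equiv.Perm (Fin n)) : Equiv.Perm (Fin (n+1)) :=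
  Equiv.ofBijective (extF σ) ((Finite.injective_iff_bijective).mp (extF_inj σ))

noncomputable def ins (σ : Equiv.Perm (Fin n)) (p : Fin (n+1)) : Equiv.Perm (Fin (n+1)) :=
  (extP σ) * (rho p)

/-- the word of `ins σ p`. -/
lemma permWord_ins (σ : Equiv.Perm (Fin n)) (p : Fin (n+1)) (i : ℕ) :
    permWord (ins σ p) i =
      if i < (p:ℕ) then permWord σ i
      else if i = (p:ℕ) then n + 1
      else permWord σ (i-1) := by
  have hp := p.isLt
  unfold permWord
  rcases lt_trichotomy i (p:ℕ) with h | h | h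
  · rw [if_pos h, dif_pos (by omega), dif_pos (by omega)]
    have : (ins σ p) ⟨i, by omega⟩ = (σ ⟨i, by omega⟩).castSucc := by
      show extP σ (rho p ⟨i, by omega⟩) = _
      rw [rho_apply]
      unfold rhoF
      rw [if_pos (by simpa using h)]
      show extF σ _ = _
      unfold extF
      rw [dif_pos (by simpa using (by omega : i < n))]
    rw [this]
    simp
  · rw [if_neg (by omega), if_pos h, dif_pos (by omega)]
    have : (ins σ p) ⟨i, by omega⟩ = Fin.last n := by
      show extP σ (rho p ⟨i, by omega⟩) = _
      rw [rho_apply]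
      unfold rhoF
      rw [if_neg (by simp [h]), if_pos (by simp [h])]
      show extF σ _ = _
      unfold extF
      rw [dif_neg (by simp)]
    rw [this]
    simp
  · rw [if_neg (by omega), if_neg (by omega)]
    by_cases hn : i < n + 1
    · rw [dif_pos hn, dif_pos (by omega)]
      have : (ins σ p) ⟨i, hn⟩ = (σ ⟨i-1, by omega⟩).castSucc := by
        show extP σ (rho p ⟨i, hn⟩) = _
        rw [rho_apply]
        unfold rhoF
        rw [if_neg (by simp; omega), if_neg (by simp; omega)]
        show extF σ _ = _
        unfold extF
        rw [dif_pos (by simp; omega)]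
      rw [this]
      simp
    · rw [dif_neg hn, dif_neg (by omega)]

lemma permWord_le (σ : Equiv.Perm (Fin n)) (i : ℕ) : permWord σ i ≤ n := by
  unfold permWord
  split_ifs with h
  · have := (σ ⟨i, h⟩).isLt; omega
  · omega

lemma permWord_eq_iff {σ τ : Equiv.Perm (Fin n)} :
    σ = τ ↔ ∀ i : ℕ, permWord σ i = permWord τ i := by
  constructor
  · rintro rfl i; rfl
  · intro h
    ext j
    have := h (j : ℕ)
    unfold permWord at this
    rw [dif_pos j.isLt, dif_pos j.isLt] at this
    simpa using this

lemma ins_injective : Function.Injective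
    (fun sp : Equiv.Perm (Fin n) × Fin (n+1) => ins sp.1 sp.2) := by
  rintro ⟨σ, p⟩ ⟨σ', p'⟩ h
  simp only at h
  have hw : ∀ i, permWord (ins σ p) i = permWord (ins σ' p') i := by rw [h]; intro i; rfl
  have hpp : p = p' := by
    by_contra hne
    rcases lt_or_gt_of_ne (fun hx => hne (Fin.ext hx) : (p:ℕ) ≠ (p':ℕ)) with hl | hl
    · have := hw p
      rw [permWord_ins, permWord_ins, if_neg (lt_irrefl _), if_pos rfl, if_pos hl] at this
      have := permWord_le σ' (p:ℕ)
      omega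
    · have := hw p'
      rw [permWord_ins, permWord_ins, if_pos hl, if_neg (lt_irrefl _), if_pos rfl] at this
      have := permWord_le σ (p':ℕ)
      omega
  subst hpp
  have hσ : σ = σ' := by
    rw [permWord_eq_iff]
    intro i
    rcases lt_or_ge i (p:ℕ) with hl | hl
    · have := hw i
      rwa [permWord_ins, permWord_ins, if_pos hl, if_pos hl] at this
    · have := hw (i+1)
      rwa [permWord_ins, permWord_ins, if_neg (by omega), if_neg (by omega),
        if_neg (by omega), if_neg (by omega), Nat.add_sub_cancel] at this
  rw [hσ]

lemma ins_bijective : Function.Bijective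
    (fun sp : Equiv.Perm (Fin n) × Fin (n+1) => ins sp.1 sp.2) := by
  rw [Fintype.bijective_iff_injective_and_card]
  refine ⟨ins_injective, ?_⟩
  simp [Fintype.card_perm, Nat.factorial_succ, mul_comm]

lemma sum_ins {M : Type*} [AddCommMonoid M] (f : Equiv.Perm (Fin (n+1)) → M) :
    ∑ π : Equiv.Perm (Fin (n+1)), f π
      = ∑ σ : Equiv.Perm (Fin n), ∑ p : Fin (n+1), f (ins σ p) := by
  have := Fintype.sum_bijective _ ins_bijective
    (fun sp : Equiv.Perm (Fin n) × Fin (n+1) => f (ins sp.1 sp.2))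
    (fun π : Equiv.Perm (Fin (n+1)) => f π) (fun sp => rfl)
  rw [← this, Fintype.sum_prod_type]

abbrev Rp := MvPolynomial (Fin 3) ℝ

noncomputable def Xp : Rp := MvPolynomial.X 0
noncomputable def Yp : Rp := MvPolynomial.X 1
noncomputable def Sp : Rp := MvPolynomial.X 2

noncomputable def mu (u v : ℕ) : Rp := if v < u then Yp else if v = u + 1 then Sp else Xp

noncomputable def Mon {n : ℕ} (σ : Equiv.Perm (Fin n)) : Rp :=
  ∏ i ∈ range (n-1), mu (permWord σ i) (permWord σ (i+1))

lemma permWord_ne (σ : Equiv.Perm (Fin n)) {i j : ℕ} (hi : i < n) (hj : j < n) (hij : i ≠ j) :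
    permWord σ i ≠ permWord σ j := by
  unfold permWord
  rw [dif_pos hi, dif_pos hj]
  intro h
  have := σ.injective (Fin.ext (by omega : ((σ ⟨i, hi⟩ : Fin n) : ℕ) = (σ ⟨j, hj⟩ : Fin n)))
  simp at this
  omega

lemma permWord_pos (σ : Equiv.Perm (Fin n)) {i : ℕ} (hi : i < n) : 0 < permWord σ i := by
  unfold permWord; rw [dif_pos hi]; omega

lemma MonEq {n : ℕ} (σ : Equiv.Perm (Fin n)) :
    Mon σ = Xp ^ bascNum σ * Yp ^ desNum σ * Sp ^ sucNum σ := by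
  classical
  unfold Mon
  rw [← Finset.prod_filter_mul_prod_filter_not (range (n-1))
    (fun i => permWord σ (i+1) < permWord σ i)]
  have h1 : ∀ i ∈ (range (n-1)).filter (fun i => permWord σ (i+1) < permWord σ i),
      mu (permWord σ i) (permWord σ (i+1)) = Yp := by
    intro i hi
    simp only [mem_filter] at hi
    unfold mu
    rw [if_pos hi.2]
  rw [Finset.prod_congr rfl h1, Finset.prod_const]
  rw [← Finset.prod_filter_mul_prod_filter_not
    ((range (n-1)).filter (fun i => ¬ permWord σ (i+1) < permWord σ i))
    (fun i => permWord σ (i+1) = permWord σ i + 1)]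
  have h2 : ∀ i ∈ (((range (n-1)).filter (fun i => ¬ permWord σ (i+1) < permWord σ i)).filter
      (fun i => permWord σ (i+1) = permWord σ i + 1)),
      mu (permWord σ i) (permWord σ (i+1)) = Sp := by
    intro i hi
    obtain ⟨hi1, hi3⟩ := Finset.mem_filter.mp hi
    obtain ⟨-, hi2⟩ := Finset.mem_filter.mp hi1
    unfold mu
    rw [if_neg hi2, if_pos hi3]
  rw [Finset.prod_congr rfl h2, Finset.prod_const]
  have h3 : ∀ i ∈ (((range (n-1)).filter (fun i => ¬ permWord σ (i+1) < permWord σ i)).filter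
      (fun i => ¬ permWord σ (i+1) = permWord σ i + 1)),
      mu (permWord σ i) (permWord σ (i+1)) = Xp := by
    intro i hi
    obtain ⟨hi1, hi3⟩ := Finset.mem_filter.mp hi
    obtain ⟨-, hi2⟩ := Finset.mem_filter.mp hi1
    unfold mu
    rw [if_neg hi2, if_neg hi3]
  rw [Finset.prod_congr rfl h3, Finset.prod_const]
  have hsuc : (((range (n-1)).filter (fun i => ¬ permWord σ (i+1) < permWord σ i)).filter
      (fun i => permWord σ (i+1) = permWord σ i + 1)).card = sucNum σ := by
    unfold sucNum
    congr 1
    rw [Finset.filter_filter]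
    apply Finset.filter_congr
    intro i hi
    constructor
    · rintro ⟨-, h⟩; exact h
    · intro h; exact ⟨by omega, h⟩
  have hbasc : (((range (n-1)).filter (fun i => ¬ permWord σ (i+1) < permWord σ i)).filter
      (fun i => ¬ permWord σ (i+1) = permWord σ i + 1)).card = bascNum σ := by
    unfold bascNum
    congr 1
    rw [Finset.filter_filter]
    apply Finset.filter_congr
    intro i hi
    simp only [mem_range] at hi
    have hne := permWord_ne σ (by omega : i < n) (by omega : i + 1 < n) (by omega)
    constructor
    · rintro ⟨h1', h2'⟩; omega
    · intro h; exact ⟨by omega, by omega⟩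
  unfold desNum
  rw [hsuc, hbasc]
  ring

noncomputable def pd : Derivation ℝ Rp Rp :=
  MvPolynomial.pderiv 0 + MvPolynomial.pderiv 1 + MvPolynomial.pderiv 2

lemma pd_Xp : pd Xp = 1 := by
  simp [pd, Xp, MvPolynomial.pderiv_X]

lemma pd_Yp : pd Yp = 1 := by
  simp [pd, Yp, MvPolynomial.pderiv_X]

lemma pd_Sp : pd Sp = 1 := by
  simp [pd, Sp, MvPolynomial.pderiv_X]

lemma pd_mu (u v : ℕ) : pd (mu u v) = 1 := by
  unfold mu
  split_ifs <;> [exact pd_Yp; exact pd_Sp; exact pd_Xp]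

lemma D_prod (f : ℕ → Rp) (m : ℕ) :
    pd (∏ i ∈ range m, f i)
      = ∑ i ∈ range m, (∏ j ∈ range i, f j) * pd (f i) * (∏ j ∈ Ico (i+1) m, f j) := by
  induction m with
  | zero => simp
  | succ m ih =>
    rw [Finset.prod_range_succ, Derivation.leibniz, Finset.sum_range_succ]
    simp only [smul_eq_mul]
    rw [ih, Finset.mul_sum, Finset.Ico_self (m+1), Finset.prod_empty, mul_one, add_comm]
    congr 1
    apply Finset.sum_congr rfl
    intro i hi
    rw [Finset.prod_Ico_succ_top (by simp at hi; omega : i + 1 ≤ m)]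
    ring

noncomputable def Pi' {n : ℕ} (σ : Equiv.Perm (Fin n)) (i : ℕ) : Rp :=
  (∏ j ∈ range i, mu (permWord σ j) (permWord σ (j+1)))
    * (∏ j ∈ Ico (i+1) (n-1), mu (permWord σ j) (permWord σ (j+1)))

lemma pd_Mon {n : ℕ} (σ : Equiv.Perm (Fin n)) :
    pd (Mon σ) = ∑ i ∈ range (n-1), Pi' σ i := by
  unfold Mon
  rw [D_prod]
  apply Finset.sum_congr rfl
  intro i hi
  rw [pd_mu]
  unfold Pi'
  ring

section Products

variable {m : ℕ} (σ : Equiv.Perm (Fin (m+1)))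

lemma Mon_eq_Pi' {i₀ : ℕ} (h : i₀ < m) :
    Mon σ = Pi' σ i₀ * mu (permWord σ i₀) (permWord σ (i₀+1)) := by
  unfold Mon Pi'
  simp only [Nat.add_sub_cancel]
  rw [← Finset.prod_range_mul_prod_Ico _ (by omega : i₀ + 1 ≤ m),
    Finset.prod_range_succ]
  ring

lemma Mon_ins_front : Mon (ins σ (0 : Fin (m+2))) = Yp * Mon σ := by
  unfold Mon
  simp only [Nat.add_sub_cancel]
  rw [Finset.prod_range_succ']
  have h0 : mu (permWord (ins σ (0 : Fin (m+2))) 0) (permWord (ins σ (0 : Fin (m+2))) 1)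
      = Yp := by
    rw [permWord_ins, permWord_ins]
    simp only [Fin.val_zero, lt_irrefl, if_neg, if_pos rfl]
    norm_num
    unfold mu
    rw [if_pos (by have := permWord_le σ 0; omega)]
  have h1 : ∀ i ∈ range m,
      mu (permWord (ins σ (0 : Fin (m+2))) (i+1)) (permWord (ins σ (0 : Fin (m+2))) (i+1+1))
        = mu (permWord σ i) (permWord σ (i+1)) := by
    intro i hi
    rw [permWord_ins, permWord_ins]
    simp only [Fin.val_zero]
    simp only [Nat.not_lt_zero, Nat.add_one_ne_zero, if_false]
    norm_num
  rw [Finset.prod_congr rfl h1, h0]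
  ring

lemma Mon_ins_last :
    Mon (ins σ (Fin.last (m+1))) = Mon σ * mu (permWord σ m) (m+2) := by
  unfold Mon
  simp only [Nat.add_sub_cancel]
  rw [Finset.prod_range_succ]
  have h1 : ∀ i ∈ range m,
      mu (permWord (ins σ (Fin.last (m+1))) i) (permWord (ins σ (Fin.last (m+1))) (i+1))
        = mu (permWord σ i) (permWord σ (i+1)) := by
    intro i hi
    simp only [mem_range] at hi
    rw [permWord_ins, permWord_ins]
    simp only [Fin.val_last]
    rw [if_pos (by omega), if_pos (by omega)]
  have h0 : mu (permWord (ins σ (Fin.last (m+1))) m) (permWord (ins σ (Fin.last (m+1))) (m+1))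
      = mu (permWord σ m) (m+2) := by
    rw [permWord_ins, permWord_ins]
    simp only [Fin.val_last]
    rw [if_pos (by omega), if_neg (by omega)]
    norm_num
  rw [Finset.prod_congr rfl h1, h0]

lemma Mon_ins_mid {i₀ : ℕ} (h : i₀ < m) :
    Mon (ins σ (⟨i₀ + 1, by omega⟩ : Fin (m+2)))
      = Pi' σ i₀ * mu (permWord σ i₀) (m+2) * Yp := by
  set p : Fin (m+2) := ⟨i₀ + 1, by omega⟩ with hp
  have hpv : (p : ℕ) = i₀ + 1 := rfl
  unfold Mon
  simp only [Nat.add_sub_cancel]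
  rw [← Finset.prod_range_mul_prod_Ico _ (by omega : i₀ + 2 ≤ m + 1),
    Finset.prod_range_succ, Finset.prod_range_succ]
  have e1 : ∀ i ∈ range i₀,
      mu (permWord (ins σ p) i) (permWord (ins σ p) (i+1))
        = mu (permWord σ i) (permWord σ (i+1)) := by
    intro i hi
    simp only [mem_range] at hi
    rw [permWord_ins, permWord_ins, hpv, if_pos (by omega), if_pos (by omega)]
  have e2 : mu (permWord (ins σ p) i₀) (permWord (ins σ p) (i₀+1))
      = mu (permWord σ i₀) (m+2) := by
    rw [permWord_ins, permWord_ins, hpv, if_pos (by omega), if_neg (by omega), if_pos rfl]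
  have e3 : mu (permWord (ins σ p) (i₀+1)) (permWord (ins σ p) (i₀+2))
      = Yp := by
    rw [permWord_ins, permWord_ins, hpv, if_neg (by omega), if_pos rfl,
      if_neg (by omega), if_neg (by omega)]
    unfold mu
    rw [if_pos (by have := permWord_le σ (i₀ + 2 - 1); omega)]
  have e4 : ∏ i ∈ Ico (i₀+2) (m+1),
      mu (permWord (ins σ p) i) (permWord (ins σ p) (i+1))
        = ∏ j ∈ Ico (i₀+1) m, mu (permWord σ j) (permWord σ (j+1)) := by
    rw [Finset.prod_Ico_eq_prod_range, Finset.prod_Ico_eq_prod_range]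
    have hc : m + 1 - (i₀ + 2) = m - (i₀ + 1) := by omega
    rw [hc]
    apply Finset.prod_congr rfl
    intro i hi
    simp only [mem_range] at hi
    rw [permWord_ins, permWord_ins, hpv, if_neg (by omega), if_neg (by omega),
      if_neg (by omega), if_neg (by omega)]
    congr 2 <;> omega
  rw [Finset.prod_congr rfl e1, e2, e3, e4]
  unfold Pi'
  simp only [Nat.add_sub_cancel]
  ring

end Products

noncomputable def TP (n : ℕ) : Rp := ∑ σ : Equiv.Perm (Fin n), Mon σ

section Key

variable {m : ℕ} (σ : Equiv.Perm (Fin (m+1)))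

lemma c_eq {i : ℕ} (hi : i ≤ m) :
    mu (permWord σ i) (m+2) = if permWord σ i = m+1 then Sp else Xp := by
  have hle := permWord_le σ i
  unfold mu
  rw [if_neg (by omega)]
  split_ifs with h1 h2 h3
  · rfl
  · omega
  · omega
  · rfl

lemma key_exchange :
    Mon σ * mu (permWord σ m) (m+2)
      + ∑ i₀ ∈ range m, Pi' σ i₀ * mu (permWord σ i₀) (m+2) * Yp
    = Sp * Mon σ + ∑ i₀ ∈ range m, Xp * Yp * Pi' σ i₀ := by
  obtain ⟨j, hjm, hwj⟩ : ∃ j, j ≤ m ∧ permWord σ j = m + 1 := by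
    refine ⟨((σ.symm (Fin.last m)) : ℕ), by have := (σ.symm (Fin.last m)).isLt; omega, ?_⟩
    unfold permWord
    rw [dif_pos (by have := (σ.symm (Fin.last m)).isLt; omega :
      ((σ.symm (Fin.last m)) : ℕ) < m + 1)]
    have : (⟨((σ.symm (Fin.last m)) : ℕ), by have := (σ.symm (Fin.last m)).isLt; omega⟩
        : Fin (m+1)) = σ.symm (Fin.last m) := Fin.ext rfl
    rw [this, Equiv.apply_symm_apply]
    simp
  have hwne : ∀ i : ℕ, i ≤ m → i ≠ j → permWord σ i ≠ m + 1 := by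
    intro i him hijne heq
    exact permWord_ne σ (by omega : i < m+1) (by omega : j < m+1) hijne (heq.trans hwj.symm)
  by_cases hcase : j = m
  · -- max at the end
    have hcm : mu (permWord σ m) (m+2) = Sp := by
      rw [c_eq σ (le_refl m), if_pos (by rw [hcase] at hwj; exact hwj)]
    have hmid : ∀ i₀ ∈ range m, Pi' σ i₀ * mu (permWord σ i₀) (m+2) * Yp
        = Xp * Yp * Pi' σ i₀ := by
      intro i₀ hi₀
      simp only [mem_range] at hi₀
      rw [c_eq σ (by omega), if_neg (hwne i₀ (by omega) (by omega))]
      ring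
    rw [hcm, Finset.sum_congr rfl hmid]
    ring
  · -- max in the middle, at position j < m
    have hjm' : j < m := by omega
    have hcm : mu (permWord σ m) (m+2) = Xp := by
      rw [c_eq σ (le_refl m), if_neg (hwne m (le_refl m) (fun h => hcase h.symm))]
    have hcj : mu (permWord σ j) (m+2) = Sp := by
      rw [c_eq σ (by omega), if_pos hwj]
    have hmuj : mu (permWord σ j) (permWord σ (j+1)) = Yp := by
      have h1 : permWord σ (j+1) ≤ m + 1 := permWord_le σ (j+1)
      have h2 : permWord σ (j+1) ≠ m + 1 := hwne (j+1) (by omega) (by omega)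
      unfold mu
      rw [if_pos (by omega)]
    have hMon : Mon σ = Pi' σ j * Yp := by
      rw [Mon_eq_Pi' σ hjm', hmuj]
    have hjr : j ∈ range m := by simp [hjm']
    rw [← Finset.sum_erase_add _ _ hjr, ← Finset.sum_erase_add _ _ hjr]
    have hmid : ∀ i₀ ∈ (range m).erase j, Pi' σ i₀ * mu (permWord σ i₀) (m+2) * Yp
        = Xp * Yp * Pi' σ i₀ := by
      intro i₀ hi₀
      obtain ⟨hne, hi₀r⟩ := Finset.mem_erase.mp hi₀
      simp only [mem_range] at hi₀r
      rw [c_eq σ (by omega), if_neg (hwne i₀ (by omega) hne)]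
      ring
    rw [Finset.sum_congr rfl hmid, hcm, hcj, hMon]
    ring

lemma innerSum :
    ∑ p : Fin (m+2), Mon (ins σ p)
      = (Yp + Sp) * Mon σ + Xp * Yp * pd (Mon σ) := by
  rw [Fin.sum_univ_castSucc (fun p : Fin (m+2) => Mon (ins σ p)),
    Fin.sum_univ_succ (fun p : Fin (m+1) => Mon (ins σ p.castSucc))]
  have h0 : Mon (ins σ ((0 : Fin (m+1)).castSucc)) = Yp * Mon σ := by
    have : ((0 : Fin (m+1)).castSucc) = (0 : Fin (m+2)) := rfl
    rw [this, Mon_ins_front]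
  have hlast : Mon (ins σ (Fin.last (m+1))) = Mon σ * mu (permWord σ m) (m+2) :=
    Mon_ins_last σ
  have hmid : ∀ i : Fin m, Mon (ins σ ((i.succ).castSucc))
      = Pi' σ (i : ℕ) * mu (permWord σ (i : ℕ)) (m+2) * Yp := by
    intro i
    have hiv : ((i.succ).castSucc : Fin (m+2)) = ⟨(i : ℕ) + 1, by have := i.isLt; omega⟩ :=
      Fin.ext (by simp)
    rw [hiv, Mon_ins_mid σ i.isLt]
  rw [h0, hlast, Finset.sum_congr rfl (fun i _ => hmid i),
    Fin.sum_univ_eq_sum_range (fun i₀ => Pi' σ i₀ * mu (permWord σ i₀) (m+2) * Yp)]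
  have := key_exchange σ
  rw [pd_Mon]
  rw [Finset.mul_sum]
  have goal2 : Yp * Mon σ + (∑ i₀ ∈ range m, Pi' σ i₀ * mu (permWord σ i₀) (m+2) * Yp
      + Mon σ * mu (permWord σ m) (m+2))
      = Yp * Mon σ + (Sp * Mon σ + ∑ i₀ ∈ range m, Xp * Yp * Pi' σ i₀) := by
    rw [← this]; ring
  calc _ = Yp * Mon σ + (∑ i₀ ∈ range m, Pi' σ i₀ * mu (permWord σ i₀) (m+2) * Yp
      + Mon σ * mu (permWord σ m) (m+2)) := by ring
    _ = Yp * Mon σ + (Sp * Mon σ + ∑ i₀ ∈ range m, Xp * Yp * Pi' σ i₀) := goal2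
    _ = _ := by rw [Nat.add_sub_cancel]; ring

end Key

lemma TP_one : TP 1 = 1 := by
  unfold TP
  rw [Finset.sum_congr rfl (fun σ _ => (by simp [Mon] : Mon σ = 1))]
  simp [Fintype.card_perm]

lemma TP_rec (m : ℕ) :
    TP (m+2) = (Yp + Sp) * TP (m+1) + Xp * Yp * pd (TP (m+1)) := by
  unfold TP
  rw [sum_ins (fun π : Equiv.Perm (Fin (m+2)) => Mon π)]
  rw [Finset.sum_congr rfl (fun σ _ => innerSum σ)]
  rw [Finset.sum_add_distrib, ← Finset.mul_sum, ← Finset.mul_sum, map_sum]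

open PowerSeries

noncomputable def pdS (f : PowerSeries Rp) : PowerSeries Rp :=
  PowerSeries.mk fun n => pd (PowerSeries.coeff n f)

lemma coeff_pdS (f : PowerSeries Rp) (n : ℕ) :
    PowerSeries.coeff n (pdS f) = pd (PowerSeries.coeff n f) := by
  simp [pdS]

lemma pdS_add (f g : PowerSeries Rp) : pdS (f + g) = pdS f + pdS g := by
  ext n
  simp [coeff_pdS]

lemma pdS_sub (f g : PowerSeries Rp) : pdS (f - g) = pdS f - pdS g := by
  ext n
  simp [coeff_pdS]

lemma pdS_C (r : Rp) : pdS (PowerSeries.C r) = PowerSeries.C (pd r) := by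
  ext n
  simp only [coeff_pdS, PowerSeries.coeff_C]
  split_ifs <;> simp

lemma pdS_mul (f g : PowerSeries Rp) : pdS (f * g) = pdS f * g + f * pdS g := by
  apply PowerSeries.ext
  intro n
  simp only [coeff_pdS, PowerSeries.coeff_mul, map_add]
  rw [map_sum]
  rw [← Finset.sum_add_distrib]
  apply Finset.sum_congr rfl
  intro ij _
  rw [Derivation.leibniz, smul_eq_mul, smul_eq_mul]
  ring

lemma pdS_smul (r : ℝ) (f : PowerSeries Rp) : pdS (r • f) = r • pdS f := by
  apply PowerSeries.ext
  intro n
  simp only [coeff_pdS, PowerSeries.coeff_smul]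
  rw [Derivation.map_smul]

lemma mul_natCast_eq_smul (x : Rp) (k : ℕ) : x * (k : Rp) = (k : ℝ) • x := by
  rw [mul_comm, ← nsmul_eq_mul, ← Nat.cast_smul_eq_nsmul ℝ]

lemma fact_inv_succ (n : ℕ) :
    ((n+1).factorial : ℝ)⁻¹ * ((n+1 : ℕ) : ℝ) = ((n.factorial : ℝ))⁻¹ := by
  rw [Nat.factorial_succ]
  have h1 : ((n+1) : ℝ) ≠ 0 := by positivity
  have h2 : ((n.factorial : ℝ)) ≠ 0 := by positivity
  push_cast
  field_simp

noncomputable def EP (a : Rp) : PowerSeries Rp :=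
  PowerSeries.mk fun n => ((n.factorial : ℝ))⁻¹ • a ^ n

noncomputable def GP : PowerSeries Rp :=
  PowerSeries.mk fun n => ((n.factorial : ℝ))⁻¹ • TP (n+1)

noncomputable def DPS : PowerSeries Rp :=
  PowerSeries.C Yp * EP Xp - PowerSeries.C Xp * EP Yp

noncomputable def dz (f : PowerSeries Rp) : PowerSeries Rp := PowerSeries.derivative Rp f

lemma coeff_dz (f : PowerSeries Rp) (n : ℕ) :
    PowerSeries.coeff n (dz f) = PowerSeries.coeff (n+1) f * ((n+1 : ℕ) : Rp) := by
  rw [show ((n+1 : ℕ) : Rp) = ((n : Rp) + 1) by push_cast; ring]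
  exact PowerSeries.coeff_derivative f n

lemma dz_add (f g : PowerSeries Rp) : dz (f + g) = dz f + dz g := by
  unfold dz; rw [map_add]

lemma dz_sub (f g : PowerSeries Rp) : dz (f - g) = dz f - dz g := by
  unfold dz; rw [map_sub]

lemma dz_mul (f g : PowerSeries Rp) : dz (f * g) = dz f * g + f * dz g := by
  unfold dz
  rw [Derivation.leibniz, smul_eq_mul, smul_eq_mul]
  ring

lemma dz_C (r : Rp) : dz (PowerSeries.C r) = 0 := by
  unfold dz; exact PowerSeries.derivative_C (r := r)

lemma dz_EP (a : Rp) : dz (EP a) = PowerSeries.C a * EP a := by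
  apply PowerSeries.ext
  intro n
  rw [coeff_dz, PowerSeries.coeff_C_mul]
  unfold EP
  rw [PowerSeries.coeff_mk, PowerSeries.coeff_mk]
  rw [smul_mul_assoc, mul_natCast_eq_smul, smul_smul, fact_inv_succ, pow_succ,
    mul_smul_comm, pow_mul_comm']

lemma pdS_EP (a : Rp) :
    pdS (EP a) = PowerSeries.C (pd a) * (PowerSeries.X * EP a) := by
  apply PowerSeries.ext
  intro n
  rw [coeff_pdS, PowerSeries.coeff_C_mul]
  unfold EP
  rw [PowerSeries.coeff_mk]
  cases n with
  | zero =>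
    simp only [pow_zero]
    rw [PowerSeries.coeff_zero_eq_constantCoeff, map_mul]
    simp only [PowerSeries.constantCoeff_X, zero_mul, mul_zero]
    have : ((Nat.factorial 0 : ℝ))⁻¹ • (1 : Rp) = 1 := by norm_num
    rw [this]
    exact pd.map_one_eq_zero
  | succ k =>
    rw [PowerSeries.coeff_succ_X_mul, PowerSeries.coeff_mk]
    rw [Derivation.map_smul, Derivation.leibniz_pow]
    rw [Nat.succ_sub_one]
    simp only [smul_eq_mul (α := Rp)]
    rw [← Nat.cast_smul_eq_nsmul ℝ ((k+1) : ℕ) (a ^ k * pd a), smul_smul, fact_inv_succ,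
      mul_smul_comm]
    congr 1
    ring

lemma dz_GP : dz GP = PowerSeries.C (Yp + Sp) * GP + PowerSeries.C (Xp * Yp) * pdS GP := by
  apply PowerSeries.ext
  intro n
  rw [coeff_dz, map_add, PowerSeries.coeff_C_mul, PowerSeries.coeff_C_mul, coeff_pdS]
  unfold GP
  simp only [PowerSeries.coeff_mk]
  rw [mul_natCast_eq_smul, smul_smul, mul_comm (((n+1 : ℕ)):ℝ) _, fact_inv_succ]
  rw [TP_rec n, Derivation.map_smul]
  rw [mul_smul_comm, mul_smul_comm, ← smul_add]

lemma dz_DPS : dz DPS = PowerSeries.C (Xp * Yp) * (EP Xp - EP Yp) := by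
  unfold DPS
  rw [dz_sub, dz_mul, dz_mul, dz_C, dz_C, dz_EP, dz_EP]
  rw [map_mul]
  ring

lemma pdS_DPS :
    pdS DPS = (1 + PowerSeries.C Yp * PowerSeries.X) * EP Xp
      - (1 + PowerSeries.C Xp * PowerSeries.X) * EP Yp := by
  unfold DPS
  rw [pdS_sub, pdS_mul, pdS_mul, pdS_C, pdS_C, pdS_EP, pdS_EP, pd_Xp, pd_Yp]
  rw [map_one]
  ring

lemma ode_DPS : dz DPS - PowerSeries.C (Xp * Yp) * pdS DPS
    = - (PowerSeries.C (Xp * Yp) * PowerSeries.X * DPS) := by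
  rw [dz_DPS, pdS_DPS]
  unfold DPS
  ring

/-- the common ODE -/
def SatODE (H : PowerSeries Rp) : Prop :=
  dz H = PowerSeries.C (Yp + Sp) * H + PowerSeries.C (Xp * Yp) * pdS H
    - 2 * (PowerSeries.C (Xp * Yp) * PowerSeries.X * H)

lemma satODE_lhs : SatODE (DPS * DPS * GP) := by
  unfold SatODE
  rw [dz_mul, dz_mul, pdS_mul, pdS_mul, dz_GP]
  have hD := ode_DPS
  have h1 : dz DPS = PowerSeries.C (Xp * Yp) * pdS DPS
      - PowerSeries.C (Xp * Yp) * PowerSeries.X * DPS := by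
    linear_combination hD
  rw [h1]
  ring

lemma satODE_rhs : SatODE (PowerSeries.C ((Yp - Xp)^2) * EP (Yp + Sp)) := by
  unfold SatODE
  rw [dz_mul, dz_C, pdS_mul, pdS_C, dz_EP, pdS_EP]
  have h1 : pd ((Yp - Xp)^2) = 0 := by
    rw [Derivation.leibniz_pow, map_sub, pd_Xp, pd_Yp]
    simp
  have h2 : pd (Yp + Sp) = 2 := by
    rw [map_add, pd_Yp, pd_Sp]; norm_num
  rw [h1, h2, map_zero]
  ring_nf
  rw [map_ofNat]
  ring

lemma ode_unique {H1 H2 : PowerSeries Rp} (h1 : SatODE H1) (h2 : SatODE H2)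
    (h0 : PowerSeries.coeff 0 H1 = PowerSeries.coeff 0 H2) : H1 = H2 := by
  apply PowerSeries.ext
  intro n
  induction n using Nat.strong_induction_on with
  | _ n ih =>
    match n with
    | 0 => exact h0
    | (k+1) =>
      have hc : ∀ H, SatODE H → PowerSeries.coeff (k+1) H * ((k+1 : ℕ) : Rp)
          = (Yp + Sp) * PowerSeries.coeff k H + Xp * Yp * pd (PowerSeries.coeff k H)
            - 2 * (Xp * Yp * PowerSeries.coeff k (PowerSeries.X * H)) := by
        intro H hH
        have := congrArg (fun f => PowerSeries.coeff k f) hH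
        rw [coeff_dz] at this
        rw [this, map_sub, map_add, PowerSeries.coeff_C_mul, PowerSeries.coeff_C_mul, coeff_pdS]
        have : (2 : PowerSeries Rp) * (PowerSeries.C (Xp * Yp) * PowerSeries.X * H)
            = PowerSeries.C (2 * (Xp * Yp)) * (PowerSeries.X * H) := by
          rw [map_mul, map_mul]
          have h2' : PowerSeries.C (2 : Rp) = (2 : PowerSeries Rp) := by
            rw [map_ofNat]
          rw [h2', map_mul]
          ring
        rw [this, PowerSeries.coeff_C_mul]
        ring
      have e1 := hc H1 h1
      have e2 := hc H2 h2
      rw [ih k (by omega)] at e1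
      have ex : PowerSeries.coeff k (PowerSeries.X * H1)
          = PowerSeries.coeff k (PowerSeries.X * H2) := by
        match k with
        | 0 => simp
        | (j+1) =>
          rw [PowerSeries.coeff_succ_X_mul, PowerSeries.coeff_succ_X_mul]
          exact ih j (by omega)
      rw [ex] at e1
      have : PowerSeries.coeff (k+1) H1 * ((k+1 : ℕ) : Rp)
          = PowerSeries.coeff (k+1) H2 * ((k+1 : ℕ) : Rp) := by rw [e1, e2]
      exact mul_right_cancel₀ (Nat.cast_ne_zero.mpr (Nat.succ_ne_zero k)) this

lemma main_poly : DPS * DPS * GP = PowerSeries.C ((Yp - Xp)^2) * EP (Yp + Sp) := by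
  apply ode_unique satODE_lhs satODE_rhs
  have hEP : ∀ a : Rp, PowerSeries.constantCoeff (EP a) = 1 := by
    intro a
    unfold EP
    rw [← PowerSeries.coeff_zero_eq_constantCoeff, PowerSeries.coeff_mk]
    norm_num
  have hDPS : PowerSeries.constantCoeff DPS = Yp - Xp := by
    unfold DPS
    rw [map_sub, map_mul, map_mul, hEP, hEP, PowerSeries.constantCoeff_C,
      PowerSeries.constantCoeff_C]
    ring
  have hGP : PowerSeries.constantCoeff GP = 1 := by
    unfold GP
    rw [← PowerSeries.coeff_zero_eq_constantCoeff, PowerSeries.coeff_mk, TP_one]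
    norm_num
  simp only [PowerSeries.coeff_zero_eq_constantCoeff, map_mul]
  rw [hDPS, hGP, hEP, PowerSeries.constantCoeff_C]
  ring

/-- `(y·E(xz) − x·E(yz))² · Σ_{n≥0} A_{n+1}(x,y,s) zⁿ/n! = (y−x)² · E((y+s)z)`. -/
theorem stmt0 (x y s : ℝ) :
    (PowerSeries.C y * expPS x - PowerSeries.C x * expPS y) ^ 2 *
      PowerSeries.mk (fun n => trivEuler x y s (n + 1) / n.factorial) =
    PowerSeries.C ((y - x) ^ 2) * expPS (y + s) := by
  classical
  set v : Fin 3 → ℝ := ![x, y, s] with hv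
  set ev : Rp →+* ℝ := MvPolynomial.eval v with hev
  have hX : ev Xp = x := by simp [hev, Xp, hv]
  have hY : ev Yp = y := by simp [hev, Yp, hv]
  have hS : ev Sp = s := by simp [hev, Sp, hv]
  have hTP : ∀ k, ev (TP k) = trivEuler x y s k := by
    intro k
    unfold TP trivEuler
    rw [map_sum]
    apply Finset.sum_congr rfl
    intro σ _
    rw [MonEq, map_mul, map_mul, map_pow, map_pow, map_pow, hX, hY, hS]
  have hmapEP : ∀ a : Rp, PowerSeries.map ev (EP a) = expPS (ev a) := by
    intro a
    apply PowerSeries.ext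
    intro n
    rw [PowerSeries.coeff_map]
    unfold EP expPS
    rw [PowerSeries.coeff_mk, PowerSeries.coeff_mk, MvPolynomial.smul_eq_C_mul,
      map_mul, MvPolynomial.eval_C, map_pow, div_eq_mul_inv]
    ring
  have hmapGP : PowerSeries.map ev GP
      = PowerSeries.mk (fun n => trivEuler x y s (n + 1) / n.factorial) := by
    apply PowerSeries.ext
    intro n
    rw [PowerSeries.coeff_map]
    unfold GP
    rw [PowerSeries.coeff_mk, PowerSeries.coeff_mk, MvPolynomial.smul_eq_C_mul,
      map_mul, MvPolynomial.eval_C, hTP, div_eq_mul_inv]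
    ring
  have hmapDPS : PowerSeries.map ev DPS
      = PowerSeries.C y * expPS x - PowerSeries.C x * expPS y := by
    unfold DPS
    rw [map_sub, map_mul, map_mul, PowerSeries.map_C, PowerSeries.map_C,
      hmapEP, hmapEP, hX, hY]
  have hmain := congrArg (PowerSeries.map ev) main_poly
  rw [map_mul, map_mul, map_mul, hmapDPS, hmapGP, hmapEP, PowerSeries.map_C] at hmain
  rw [map_pow, map_sub, hX, hY, map_add, hY, hS] at hmain
  rw [pow_two]
  exact hmain
end

section
/- For all n ≥ 0, i ≥ 0, j ≥ 0, the number γ_{n,i,j} equals the number of 0-1-2 increasing rooted forests on {0,1,…,n} having exactly i+j leaves, of which exactly i leaves are children of the root 0. Concretely, γ_{n,i,j} equals the number of functions p : {1,…,n} → {0,1,…,n} such that p(m) < m for every m, such that every vertex v ∈ {1,…,n} has at most 2 children (where the children of v are the elements of p⁻¹(v)), such that every vertex v with p(v) = 0 has at most 1 child, and such that i = #{v ∈ {1,…,n} : p⁻¹(v) = ∅ and p(v) = 0} and j = #{v ∈ {1,…,n} : p⁻¹(v) = ∅ and p(v) ≠ 0}. -/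
open Finset

/-- The numbers `γ_{n,i,j}`: zero for negative `i` or `j`, with `γ_{0,0,0} = 1`,
`γ_{0,i,j} = 0` for `(i,j) ≠ (0,0)`, and the recurrence
`γ_{n+1,i,j} = γ_{n,i−1,j} + (1+i)γ_{n,i+1,j−1} + jγ_{n,i,j} + (n−i−2j+2)γ_{n,i,j−1}`. -/
def gam : ℕ → ℤ → ℤ → ℤ
  | 0, i, j => if i = 0 ∧ j = 0 then 1 else 0
  | n + 1, i, j =>
      if i < 0 ∨ j < 0 then 0
      else gam n (i - 1) j + (1 + i) * gam n (i + 1) (j - 1) + j * gam n i j +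
        ((n : ℤ) - i - 2 * j + 2) * gam n i (j - 1)

set_option linter.unnecessarySeqFocus false

def dg {n : ℕ} (q : Fin n → Fin (n + 1)) (u : Fin n) : ℕ :=
  (Finset.univ.filter fun m : Fin n => (q m : ℕ) = (u : ℕ) + 1).card
def isF {n : ℕ} (q : Fin n → Fin (n + 1)) : Prop :=
  (∀ m, (q m : ℕ) ≤ (m : ℕ)) ∧ (∀ v, dg q v ≤ 2) ∧ (∀ v, (q v : ℕ) = 0 → dg q v ≤ 1)
instance {n : ℕ} (q : Fin n → Fin (n + 1)) : Decidable (isF q) :=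
  inferInstanceAs (Decidable ((∀ m, (q m : ℕ) ≤ (m : ℕ)) ∧ (∀ v, dg q v ≤ 2) ∧
    (∀ v, (q v : ℕ) = 0 → dg q v ≤ 1)))
def li {n : ℕ} (q : Fin n → Fin (n + 1)) : ℕ :=
  (Finset.univ.filter fun v => dg q v = 0 ∧ (q v : ℕ) = 0).card
def lj {n : ℕ} (q : Fin n → Fin (n + 1)) : ℕ :=
  (Finset.univ.filter fun v => dg q v = 0 ∧ (q v : ℕ) ≠ 0).card
def FF (n i j : ℕ) : Finset (Fin n → Fin (n + 1)) :=
  Finset.univ.filter fun q => isF q ∧ i = li q ∧ j = lj q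
lemma mem_FF {n i j : ℕ} {q : Fin n → Fin (n + 1)} :
    q ∈ FF n i j ↔ isF q ∧ i = li q ∧ j = lj q := by simp [FF]

lemma sum_dg {n : ℕ} (q : Fin n → Fin (n + 1)) :
    ∑ u : Fin n, dg q u = ∑ m : Fin n, if (q m : ℕ) ≠ 0 then 1 else 0 := by
  simp only [dg, Finset.card_filter]
  rw [Finset.sum_comm]
  refine Finset.sum_congr rfl fun m _ => ?_
  by_cases h : (q m : ℕ) = 0
  · simp [h]
  · have hm : (q m : ℕ) ≤ n := Nat.lt_succ_iff.mp (q m).isLt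
    have hqm : (q m : ℕ) - 1 < n := by have := m.isLt; omega
    rw [Finset.sum_eq_single (⟨(q m : ℕ) - 1, hqm⟩ : Fin n)]
    · simp only [h, if_true, ne_eq, not_false_eq_true]
      rw [if_pos]
      show (q m : ℕ) = (q m : ℕ) - 1 + 1
      omega
    · intro u _ hu
      rw [if_neg]
      intro hc
      exact hu (Fin.ext (by show (u : ℕ) = (q m : ℕ) - 1; omega))
    · simp

def DD {n : ℕ} (q : Fin n → Fin (n + 1)) : ℕ :=
  (Finset.univ.filter fun u => dg q u = 1 ∧ (q u : ℕ) ≠ 0).card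

lemma Dcount {n : ℕ} {q : Fin n → Fin (n + 1)} (hq : isF q) :
    li q + 2 * lj q + DD q = n := by
  obtain ⟨-, h2, h3⟩ := hq
  have key : ∑ u : Fin n, ((if dg q u = 0 ∧ (q u : ℕ) = 0 then 1 else 0)
      + 2 * (if dg q u = 0 ∧ (q u : ℕ) ≠ 0 then 1 else 0)
      + (if dg q u = 1 ∧ (q u : ℕ) ≠ 0 then 1 else 0) + dg q u)
      = ∑ u : Fin n, (1 + (if (q u : ℕ) ≠ 0 then 1 else 0)) := by
    refine Finset.sum_congr rfl fun u _ => ?_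
    have hA := h2 u
    have hd : dg q u = 0 ∨ dg q u = 1 ∨ dg q u = 2 := by omega
    by_cases h0 : (q u : ℕ) = 0
    · have hB := h3 u h0
      rcases hd with hd | hd | hd <;> simp [h0, hd] <;> omega
    · rcases hd with hd | hd | hd <;> simp [h0, hd]
  rw [Finset.sum_add_distrib, Finset.sum_add_distrib, Finset.sum_add_distrib,
    Finset.sum_add_distrib, sum_dg, ← Finset.mul_sum] at key
  simp only [li, lj, DD, Finset.card_filter]
  have hn : (∑ _u : Fin n, 1) = n := by simp
  omega


-- layer 2
def ext {n : ℕ} (q : Fin n → Fin (n + 1)) (v : Fin (n + 2)) : Fin (n + 1) → Fin (n + 2) :=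
  Fin.lastCases v (fun m => (q m).castSucc)

@[simp] lemma ext_last {n : ℕ} (q : Fin n → Fin (n + 1)) (v : Fin (n + 2)) :
    ext q v (Fin.last n) = v := Fin.lastCases_last

@[simp] lemma ext_castSucc {n : ℕ} (q : Fin n → Fin (n + 1)) (v : Fin (n + 2)) (m : Fin n) :
    ext q v m.castSucc = (q m).castSucc := Fin.lastCases_castSucc m

lemma card_filter_split {n : ℕ} (P : Fin (n + 1) → Prop) [DecidablePred P] :
    (Finset.univ.filter P).card =
      (Finset.univ.filter fun u : Fin n => P u.castSucc).card +
        (if P (Fin.last n) then 1 else 0) := by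
  rw [Finset.card_filter, Finset.card_filter, Fin.sum_univ_castSucc]

lemma forall_split {n : ℕ} (P : Fin (n + 1) → Prop) :
    (∀ m, P m) ↔ (∀ u : Fin n, P u.castSucc) ∧ P (Fin.last n) :=
  ⟨fun h => ⟨fun u => h _, h _⟩, fun ⟨h1, h2⟩ m => Fin.lastCases h2 h1 m⟩

lemma dg_ext_castSucc {n : ℕ} (q : Fin n → Fin (n + 1)) (v : Fin (n + 2)) (u : Fin n) :
    dg (ext q v) u.castSucc = dg q u + if (v : ℕ) = (u : ℕ) + 1 then 1 else 0 := by
  unfold dg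
  rw [card_filter_split]
  simp only [ext_castSucc, ext_last, Fin.coe_castSucc, Fin.val_last]

lemma dg_ext_last {n : ℕ} (q : Fin n → Fin (n + 1)) (v : Fin (n + 2)) :
    dg (ext q v) (Fin.last n) = if (v : ℕ) = n + 1 then 1 else 0 := by
  unfold dg
  rw [card_filter_split]
  simp only [ext_castSucc, ext_last, Fin.coe_castSucc, Fin.val_last]
  rw [Finset.filter_false_of_mem, Finset.card_empty, Nat.zero_add]
  intro w _
  have := (q w).isLt
  omega

lemma li_ext {n : ℕ} (q : Fin n → Fin (n + 1)) (v : Fin (n + 2)) (hv : (v : ℕ) ≤ n) :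
    li (ext q v) = (Finset.univ.filter fun u : Fin n =>
        dg q u + (if (v : ℕ) = (u : ℕ) + 1 then 1 else 0) = 0 ∧ (q u : ℕ) = 0).card
      + (if (v : ℕ) = 0 then 1 else 0) := by
  unfold li
  rw [card_filter_split]
  congr 1
  · refine congrArg Finset.card (Finset.filter_congr fun u _ => ?_)
    rw [dg_ext_castSucc]
    simp
  · simp only [dg_ext_last, ext_last]
    rw [if_neg (show ¬ (v : ℕ) = n + 1 by omega)]
    simp

lemma lj_ext {n : ℕ} (q : Fin n → Fin (n + 1)) (v : Fin (n + 2)) (hv : (v : ℕ) ≤ n) :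
    lj (ext q v) = (Finset.univ.filter fun u : Fin n =>
        dg q u + (if (v : ℕ) = (u : ℕ) + 1 then 1 else 0) = 0 ∧ (q u : ℕ) ≠ 0).card
      + (if (v : ℕ) ≠ 0 then 1 else 0) := by
  unfold lj
  rw [card_filter_split]
  congr 1
  · refine congrArg Finset.card (Finset.filter_congr fun u _ => ?_)
    rw [dg_ext_castSucc]
    simp
  · simp only [dg_ext_last, ext_last]
    rw [if_neg (show ¬ (v : ℕ) = n + 1 by omega)]
    simp

lemma isF_ext {n : ℕ} (q : Fin n → Fin (n + 1)) (v : Fin (n + 2)) (hv : (v : ℕ) ≤ n) :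
    isF (ext q v) ↔
      (∀ m, (q m : ℕ) ≤ (m : ℕ)) ∧
      (∀ u, dg q u + (if (v : ℕ) = (u : ℕ) + 1 then 1 else 0) ≤ 2) ∧
      (∀ u, (q u : ℕ) = 0 → dg q u + (if (v : ℕ) = (u : ℕ) + 1 then 1 else 0) ≤ 1) := by
  unfold isF
  rw [forall_split (fun m => ((ext q v) m : ℕ) ≤ (m : ℕ)),
    forall_split (fun w => dg (ext q v) w ≤ 2),
    forall_split (fun w => ((ext q v) w : ℕ) = 0 → dg (ext q v) w ≤ 1)]
  simp only [ext_castSucc, ext_last, dg_ext_castSucc, dg_ext_last, Fin.coe_castSucc,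
    Fin.val_last]
  rw [if_neg (show ¬ (v : ℕ) = n + 1 by omega)]
  constructor
  · rintro ⟨⟨h1, -⟩, ⟨h2, -⟩, ⟨h3, -⟩⟩
    exact ⟨h1, h2, h3⟩
  · rintro ⟨h1, h2, h3⟩
    exact ⟨⟨h1, hv⟩, ⟨h2, by omega⟩, ⟨h3, fun _ => by omega⟩⟩

lemma card_mod_u {n : ℕ} (u : Fin n) (A B : Fin n → Prop) [DecidablePred A] [DecidablePred B]
    (hAB : ∀ w, w ≠ u → (A w ↔ B w)) (hu : ¬ A u) :
    (Finset.univ.filter A).card + (if B u then 1 else 0) = (Finset.univ.filter B).card := by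
  rw [Finset.card_filter, Finset.card_filter]
  have h : (if B u then 1 else 0) =
      ∑ w : Fin n, if w = u then (if B w then 1 else 0) else 0 := by
    rw [Finset.sum_ite_eq']; simp
  rw [h, ← Finset.sum_add_distrib]
  refine Finset.sum_congr rfl fun w _ => ?_
  by_cases hw : w = u
  · subst hw; simp [hu]
  · simp [hw, hAB w hw]

lemma M0 {n i j : ℕ} (q : Fin n → Fin (n + 1)) :
    ext q 0 ∈ FF (n + 1) i j ↔ isF q ∧ i = li q + 1 ∧ j = lj q := by
  have h0 : ((0 : Fin (n + 2)) : ℕ) = 0 := rfl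
  rw [mem_FF, isF_ext q 0 (by omega), li_ext q 0 (by omega), lj_ext q 0 (by omega)]
  simp only [h0]
  have hfalse : ∀ u : Fin n, ¬ (0 = (u : ℕ) + 1) := by intro u; omega
  simp only [hfalse, if_false, if_pos rfl, Nat.add_zero, ne_eq, not_true_eq_false,
    if_neg (show ¬ (0 : ℕ) ≠ 0 by simp)]
  unfold isF li lj
  tauto

lemma M2 {n i j : ℕ} (q : Fin n → Fin (n + 1)) :
    ext q (Fin.last (n + 1)) ∉ FF (n + 1) i j := by
  rw [mem_FF]
  rintro ⟨⟨h1, -⟩, -⟩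
  have := h1 (Fin.last n)
  rw [ext_last] at this
  simp [Fin.val_last] at this

lemma M1 {n i j : ℕ} (q : Fin n → Fin (n + 1)) (u : Fin n) :
    ext q u.castSucc.succ ∈ FF (n + 1) i j ↔
      isF q ∧ dg q u + 1 ≤ 2 ∧ ((q u : ℕ) = 0 → dg q u + 1 ≤ 1) ∧
      i + (if dg q u = 0 ∧ (q u : ℕ) = 0 then 1 else 0) = li q ∧
      j + (if dg q u = 0 ∧ (q u : ℕ) ≠ 0 then 1 else 0) = lj q + 1 := by
  have hval : ((u.castSucc.succ : Fin (n + 2)) : ℕ) = (u : ℕ) + 1 := by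
    simp [Fin.val_succ]
  have hvn : ((u.castSucc.succ : Fin (n + 2)) : ℕ) ≤ n := by rw [hval]; exact u.isLt
  rw [mem_FF, isF_ext q _ hvn, li_ext q _ hvn, lj_ext q _ hvn]
  simp only [hval]
  have hA := card_mod_u u
    (fun w => dg q w + (if (u : ℕ) + 1 = (w : ℕ) + 1 then 1 else 0) = 0 ∧ (q w : ℕ) = 0)
    (fun w => dg q w = 0 ∧ (q w : ℕ) = 0)
    (fun w hw => by
      rw [if_neg (fun hc : (u : ℕ) + 1 = (w : ℕ) + 1 => hw (Fin.ext (by omega)).symm)]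
      simp)
    (by simp)
  have hB := card_mod_u u
    (fun w => dg q w + (if (u : ℕ) + 1 = (w : ℕ) + 1 then 1 else 0) = 0 ∧ (q w : ℕ) ≠ 0)
    (fun w => dg q w = 0 ∧ (q w : ℕ) ≠ 0)
    (fun w hw => by
      rw [if_neg (fun hc : (u : ℕ) + 1 = (w : ℕ) + 1 => hw (Fin.ext (by omega)).symm)]
      simp)
    (by simp)
  beta_reduce at hA hB
  rw [show li q = (Finset.univ.filter fun w => dg q w = 0 ∧ (q w : ℕ) = 0).card from rfl,
    show lj q = (Finset.univ.filter fun w => dg q w = 0 ∧ (q w : ℕ) ≠ 0).card from rfl]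
  rw [if_neg (Nat.add_one_ne_zero (u : ℕ)),
    if_pos (show ((u : ℕ) + 1) ≠ 0 from Nat.add_one_ne_zero _)]
  constructor
  · rintro ⟨⟨h1, h2, h3⟩, hi, hj⟩
    have h2u := h2 u
    have h3u := h3 u
    rw [if_pos rfl] at h2u h3u
    refine ⟨⟨h1, fun w => le_trans (Nat.le_add_right _ _) (h2 w), fun w hw =>
      le_trans (Nat.le_add_right _ _) (h3 w hw)⟩, h2u, h3u, by omega, by omega⟩
  · rintro ⟨⟨h1, h2, h3⟩, hd2, hd3, hi, hj⟩
    refine ⟨⟨h1, fun w => ?_, fun w hw => ?_⟩, by omega, by omega⟩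
    · by_cases hwu : (u : ℕ) + 1 = (w : ℕ) + 1
      · have hweq : w = u := Fin.ext (by omega)
        subst hweq
        rw [if_pos hwu]; exact hd2
      · rw [if_neg hwu]; simpa using h2 w
    · by_cases hwu : (u : ℕ) + 1 = (w : ℕ) + 1
      · have hweq : w = u := Fin.ext (by omega)
        subst hweq
        rw [if_pos hwu]; exact hd3 hw
      · rw [if_neg hwu]; simpa using h3 w hw

def res {n : ℕ} (p : Fin (n + 1) → Fin (n + 2)) : Fin n → Fin (n + 1) :=
  fun m => ⟨min ((p m.castSucc : ℕ)) (m : ℕ),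
    lt_of_le_of_lt (min_le_right _ _) (Nat.lt_succ_of_lt m.isLt)⟩

lemma res_ext {n : ℕ} {q : Fin n → Fin (n + 1)} {v : Fin (n + 2)}
    (h : ∀ m : Fin n, (q m : ℕ) ≤ (m : ℕ)) : res (ext q v) = q := by
  funext m
  apply Fin.ext
  show min ((ext q v m.castSucc : ℕ)) (m : ℕ) = (q m : ℕ)
  rw [ext_castSucc]
  simpa using min_eq_left (h m)

lemma ext_res {n : ℕ} {p : Fin (n + 1) → Fin (n + 2)}
    (hp : ∀ m : Fin (n + 1), (p m : ℕ) ≤ (m : ℕ)) : ext (res p) (p (Fin.last n)) = p := by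
  funext m
  induction m using Fin.lastCases with
  | last => rw [ext_last]
  | cast m =>
    rw [ext_castSucc]
    apply Fin.ext
    show ((res p m : ℕ) : ℕ) = _
    have h1 : (p m.castSucc : ℕ) ≤ (m : ℕ) := by simpa using hp m.castSucc
    show min ((p m.castSucc : ℕ)) (m : ℕ) = (p m.castSucc : ℕ)
    exact min_eq_left h1

lemma card_step (n i j : ℕ) :
    (FF (n + 1) i j).card =
      ∑ q : Fin n → Fin (n + 1),
        (Finset.univ.filter fun v : Fin (n + 2) => ext q v ∈ FF (n + 1) i j).card := by
  rw [Finset.card_eq_sum_card_fiberwise (f := res) (t := Finset.univ)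
    (fun p _ => Finset.mem_univ _)]
  refine Finset.sum_congr rfl fun q _ => ?_
  refine Finset.card_bij' (fun p _ => p (Fin.last n)) (fun v _ => ext q v) ?_ ?_ ?_ ?_
  · intro p hp
    obtain ⟨hpF, hq⟩ := Finset.mem_filter.mp hp
    have hmono : ∀ m : Fin (n + 1), (p m : ℕ) ≤ (m : ℕ) := (mem_FF.mp hpF).1.1
    simp only [Finset.mem_filter, Finset.mem_univ, true_and]
    rw [← hq, ext_res hmono]
    exact hpF
  · intro v hv
    simp only [Finset.mem_filter, Finset.mem_univ, true_and] at hv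
    have hmono : ∀ m : Fin n, (q m : ℕ) ≤ (m : ℕ) := by
      intro m
      have := (mem_FF.mp hv).1.1 m.castSucc
      rw [ext_castSucc] at this
      simpa using this
    exact Finset.mem_filter.mpr ⟨hv, res_ext hmono⟩
  · intro p hp
    obtain ⟨hpF, hq⟩ := Finset.mem_filter.mp hp
    have hmono : ∀ m : Fin (n + 1), (p m : ℕ) ≤ (m : ℕ) := (mem_FF.mp hpF).1.1
    show ext q (p (Fin.last n)) = p
    rw [← hq, ext_res hmono]
  · intro v _
    show ext q v (Fin.last n) = v
    rw [ext_last]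

lemma cq_eq (n i j : ℕ) (q : Fin n → Fin (n + 1)) :
    (Finset.univ.filter fun v : Fin (n + 2) => ext q v ∈ FF (n + 1) i j).card
    = (if isF q ∧ i = li q + 1 ∧ j = lj q then 1 else 0)
    + (if isF q ∧ i + 1 = li q ∧ j = lj q + 1 then li q else 0)
    + (if isF q ∧ i = li q ∧ j = lj q then lj q else 0)
    + (if isF q ∧ i = li q ∧ j = lj q + 1 then DD q else 0) := by
  rw [Finset.card_filter, Fin.sum_univ_succ, Fin.sum_univ_castSucc, Fin.succ_last,
    if_neg (M2 q)]
  simp only [M0, M1]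
  by_cases hq : isF q
  · obtain ⟨h1, h2, h3⟩ := id hq
    simp only [hq, true_and, Nat.add_zero]
    have key : ∀ u : Fin n,
        (if dg q u + 1 ≤ 2 ∧ ((q u : ℕ) = 0 → dg q u + 1 ≤ 1) ∧
            i + (if dg q u = 0 ∧ (q u : ℕ) = 0 then 1 else 0) = li q ∧
            j + (if dg q u = 0 ∧ (q u : ℕ) ≠ 0 then 1 else 0) = lj q + 1 then 1 else 0)
        = (if i + 1 = li q ∧ j = lj q + 1 then 1 else 0) *
            (if dg q u = 0 ∧ (q u : ℕ) = 0 then 1 else 0)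
          + (if i = li q ∧ j = lj q then 1 else 0) *
            (if dg q u = 0 ∧ (q u : ℕ) ≠ 0 then 1 else 0)
          + (if i = li q ∧ j = lj q + 1 then 1 else 0) *
            (if dg q u = 1 ∧ (q u : ℕ) ≠ 0 then 1 else 0) := by
      intro u
      have hd2 := h2 u
      have hd : dg q u = 0 ∨ dg q u = 1 ∨ dg q u = 2 := by omega
      by_cases h0 : (q u : ℕ) = 0
      · have hd1 := h3 u h0
        rcases hd with hdg | hdg | hdg <;> simp [h0, hdg] <;> split_ifs <;> omega
      · rcases hd with hdg | hdg | hdg <;> simp [h0, hdg] <;> split_ifs <;> omega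
    rw [Finset.sum_congr rfl fun u _ => key u, Finset.sum_add_distrib,
      Finset.sum_add_distrib, ← Finset.mul_sum, ← Finset.mul_sum, ← Finset.mul_sum]
    have eli : ∑ u : Fin n, (if dg q u = 0 ∧ (q u : ℕ) = 0 then 1 else 0) = li q :=
      (Finset.card_filter _ _).symm
    have elj : ∑ u : Fin n, (if dg q u = 0 ∧ (q u : ℕ) ≠ 0 then 1 else 0) = lj q :=
      (Finset.card_filter _ _).symm
    have edd : ∑ u : Fin n, (if dg q u = 1 ∧ (q u : ℕ) ≠ 0 then 1 else 0) = DD q :=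
      (Finset.card_filter _ _).symm
    rw [eli, elj, edd]
    simp only [ite_mul, one_mul, zero_mul]
    ring
  · simp [hq]

lemma gam_neg : ∀ (n : ℕ) (x y : ℤ), (x < 0 ∨ y < 0) → gam n x y = 0
  | 0, x, y, h => by
    simp only [gam]
    rw [if_neg]
    rintro ⟨rfl, rfl⟩
    omega
  | n + 1, x, y, h => by
    simp only [gam]
    rw [if_pos h]

lemma main (n : ℕ) : ∀ i j : ℕ, gam n (i : ℤ) (j : ℤ) = ((FF n i j).card : ℤ) := by
  induction n with
  | zero =>
    intro i j
    have hli : ∀ q : Fin 0 → Fin 1, li q = 0 := fun q => by simp [li]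
    have hlj : ∀ q : Fin 0 → Fin 1, lj q = 0 := fun q => by simp [lj]
    by_cases h : i = 0 ∧ j = 0
    · obtain ⟨rfl, rfl⟩ := h
      have hFF : FF 0 0 0 = Finset.univ := by
        refine Finset.filter_true_of_mem fun q _ => ?_
        exact ⟨⟨fun m => m.elim0, fun v => v.elim0, fun v => v.elim0⟩,
          (hli q).symm, (hlj q).symm⟩
      rw [hFF]
      show (if (0 : ℤ) = 0 ∧ (0 : ℤ) = 0 then (1 : ℤ) else 0) = _
      rw [if_pos ⟨rfl, rfl⟩]
      rw [Finset.card_univ]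
      simp
    · have h' : ¬ ((i : ℤ) = 0 ∧ (j : ℤ) = 0) := by
        intro hc
        exact h ⟨by exact_mod_cast hc.1, by exact_mod_cast hc.2⟩
      show (if (i : ℤ) = 0 ∧ (j : ℤ) = 0 then (1 : ℤ) else 0) = _
      rw [if_neg h']
      have hFF : FF 0 i j = ∅ := by
        ext q
        rw [mem_FF]
        simp only [Finset.notMem_empty, iff_false]
        rintro ⟨-, hi, hj⟩
        exact h ⟨by rw [hi, hli], by rw [hj, hlj]⟩
      rw [hFF]
      simp
  | succ n IH =>
    intro i j
    have hR : (FF (n + 1) i j).card =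
        (∑ q : Fin n → Fin (n + 1), if isF q ∧ i = li q + 1 ∧ j = lj q then 1 else 0)
      + (∑ q : Fin n → Fin (n + 1), if isF q ∧ i + 1 = li q ∧ j = lj q + 1 then li q else 0)
      + (∑ q : Fin n → Fin (n + 1), if isF q ∧ i = li q ∧ j = lj q then lj q else 0)
      + (∑ q : Fin n → Fin (n + 1), if isF q ∧ i = li q ∧ j = lj q + 1 then DD q else 0) := by
      rw [card_step, Finset.sum_congr rfl fun q _ => cq_eq n i j q,
        Finset.sum_add_distrib, Finset.sum_add_distrib, Finset.sum_add_distrib]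
    have hcard : ∀ a b : ℕ, (FF n a b).card =
        ∑ q : Fin n → Fin (n + 1), if isF q ∧ a = li q ∧ b = lj q then 1 else 0 :=
      fun a b => Finset.card_filter _ _
    -- term A
    have hA : ((∑ q : Fin n → Fin (n + 1),
        if isF q ∧ i = li q + 1 ∧ j = lj q then 1 else 0 : ℕ) : ℤ)
        = gam n ((i : ℤ) - 1) (j : ℤ) := by
      cases i with
      | zero =>
        rw [Finset.sum_eq_zero fun q _ => if_neg (by rintro ⟨-, h, -⟩; omega)]
        rw [gam_neg n _ _ (by left; omega)]
        simp
      | succ i0 =>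
        have hstep : (∑ q : Fin n → Fin (n + 1),
            if isF q ∧ i0 + 1 = li q + 1 ∧ j = lj q then 1 else 0)
            = (∑ q : Fin n → Fin (n + 1),
              if isF q ∧ i0 = li q ∧ j = lj q then 1 else 0) := by
          refine Finset.sum_congr rfl fun q _ => ?_
          refine if_congr ?_ rfl rfl
          constructor
          · rintro ⟨h1, h2, h3⟩; exact ⟨h1, by omega, h3⟩
          · rintro ⟨h1, h2, h3⟩; exact ⟨h1, by omega, h3⟩
        rw [hstep, ← hcard i0 j,
          show ((i0 + 1 : ℕ) : ℤ) - 1 = (i0 : ℤ) by push_cast; ring]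
        exact (IH i0 j).symm
    -- term B
    have hB : ((∑ q : Fin n → Fin (n + 1),
        if isF q ∧ i + 1 = li q ∧ j = lj q + 1 then li q else 0 : ℕ) : ℤ)
        = (1 + (i : ℤ)) * gam n ((i : ℤ) + 1) ((j : ℤ) - 1) := by
      cases j with
      | zero =>
        rw [Finset.sum_eq_zero fun q _ => if_neg (by rintro ⟨-, -, h⟩; omega)]
        rw [gam_neg n _ _ (by right; omega)]
        simp
      | succ j0 =>
        have step1 : (∑ q : Fin n → Fin (n + 1),
            if isF q ∧ i + 1 = li q ∧ j0 + 1 = lj q + 1 then li q else 0)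
            = (i + 1) * ∑ q : Fin n → Fin (n + 1),
              if isF q ∧ i + 1 = li q ∧ j0 = lj q then 1 else 0 := by
          rw [Finset.mul_sum]
          refine Finset.sum_congr rfl fun q _ => ?_
          by_cases hC : isF q ∧ i + 1 = li q ∧ j0 = lj q
          · rw [if_pos ⟨hC.1, hC.2.1, by omega⟩, if_pos hC, hC.2.1.symm, mul_one]
          · rw [if_neg, if_neg hC, mul_zero]
            rintro ⟨h1, h2, h3⟩
            exact hC ⟨h1, h2, by omega⟩
        rw [step1, ← hcard (i + 1) j0]
        rw [show ((j0 + 1 : ℕ) : ℤ) - 1 = (j0 : ℤ) by push_cast; ring]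
        rw [show ((i : ℕ) : ℤ) + 1 = ((i + 1 : ℕ) : ℤ) by push_cast; ring]
        rw [IH (i + 1) j0]
        push_cast
        ring
    -- term C
    have hC : ((∑ q : Fin n → Fin (n + 1),
        if isF q ∧ i = li q ∧ j = lj q then lj q else 0 : ℕ) : ℤ)
        = (j : ℤ) * gam n (i : ℤ) (j : ℤ) := by
      have step1 : (∑ q : Fin n → Fin (n + 1),
          if isF q ∧ i = li q ∧ j = lj q then lj q else 0)
          = j * ∑ q : Fin n → Fin (n + 1),
            if isF q ∧ i = li q ∧ j = lj q then 1 else 0 := by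
        rw [Finset.mul_sum]
        refine Finset.sum_congr rfl fun q _ => ?_
        by_cases hCo : isF q ∧ i = li q ∧ j = lj q
        · rw [if_pos hCo, if_pos hCo, hCo.2.2.symm, mul_one]
        · rw [if_neg hCo, if_neg hCo, mul_zero]
      rw [step1, ← hcard i j, IH i j]
      push_cast
      ring
    -- term D
    have hD : ((∑ q : Fin n → Fin (n + 1),
        if isF q ∧ i = li q ∧ j = lj q + 1 then DD q else 0 : ℕ) : ℤ)
        = ((n : ℤ) - i - 2 * j + 2) * gam n (i : ℤ) ((j : ℤ) - 1) := by
      cases j with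
      | zero =>
        rw [Finset.sum_eq_zero fun q _ => if_neg (by rintro ⟨-, -, h⟩; omega)]
        rw [gam_neg n _ _ (by right; omega)]
        simp
      | succ j0 =>
        have step1 : ((∑ q : Fin n → Fin (n + 1),
            if isF q ∧ i = li q ∧ j0 + 1 = lj q + 1 then DD q else 0 : ℕ) : ℤ)
            = ((n : ℤ) - i - 2 * (j0 + 1) + 2) * ∑ q : Fin n → Fin (n + 1),
              ((if isF q ∧ i = li q ∧ j0 = lj q then 1 else 0) : ℤ) := by
          push_cast
          rw [Finset.mul_sum]
          refine Finset.sum_congr rfl fun q _ => ?_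
          by_cases hCo : isF q ∧ i = li q ∧ j0 = lj q
          · rw [if_pos ⟨hCo.1, hCo.2.1, by omega⟩, if_pos hCo, mul_one]
            have hd := Dcount hCo.1
            have h1 : li q = i := hCo.2.1.symm
            have h2 : lj q = j0 := hCo.2.2.symm
            rw [h1, h2] at hd
            omega
          · rw [if_neg, if_neg hCo, mul_zero]
            rintro ⟨h1, h2, h3⟩
            exact hCo ⟨h1, h2, by omega⟩
        rw [step1]
        have : (∑ q : Fin n → Fin (n + 1),
            ((if isF q ∧ i = li q ∧ j0 = lj q then 1 else 0) : ℤ))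
            = ((FF n i j0).card : ℤ) := by
          rw [hcard i j0]
          push_cast
          rfl
        rw [this, ← IH i j0]
        rw [show ((j0 + 1 : ℕ) : ℤ) - 1 = (j0 : ℤ) by push_cast; ring]
        push_cast
        ring
    have hnn : ¬ ((i : ℤ) < 0 ∨ (j : ℤ) < 0) := by omega
    show gam (n + 1) (i : ℤ) (j : ℤ) = _
    rw [show gam (n + 1) (i : ℤ) (j : ℤ) =
      gam n ((i : ℤ) - 1) (j : ℤ) + (1 + (i : ℤ)) * gam n ((i : ℤ) + 1) ((j : ℤ) - 1) +
        (j : ℤ) * gam n (i : ℤ) (j : ℤ) +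
        ((n : ℤ) - (i : ℤ) - 2 * (j : ℤ) + 2) * gam n (i : ℤ) ((j : ℤ) - 1) from by
      simp only [gam]
      rw [if_neg hnn]]
    rw [hR, ← hA, ← hB, ← hC, ← hD]
    push_cast
    ring

/-- `γ_{n,i,j}` equals the number of 0-1-2 increasing rooted forests on `{0,1,…,n}` with
`i+j` leaves, among which `i` leaves are children of the root `0`.  A forest is encoded by
its parent function `p : {1,…,n} → {0,…,n}` with `p(m) < m`; here the vertex `m ∈ {1,…,n}`
is represented by the index `m-1 : Fin n`, and its parent `p(m) ∈ {0,…,n}` by `p ⟨m-1⟩ : Fin (n+1)`. -/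
theorem stmt2 (n i j : ℕ) :
    gam n i j =
      (Finset.univ.filter (fun p : Fin n → Fin (n + 1) =>
        -- p(m) < m for every vertex m ∈ {1,…,n}
        (∀ m : Fin n, (p m : ℕ) ≤ (m : ℕ)) ∧
        -- every vertex v ∈ {1,…,n} has at most 2 children
        (∀ v : Fin n, (Finset.univ.filter fun m : Fin n => (p m : ℕ) = (v : ℕ) + 1).card ≤ 2) ∧
        -- every vertex v with p(v) = 0 has at most 1 child
        (∀ v : Fin n, (p v : ℕ) = 0 →
          (Finset.univ.filter fun m : Fin n => (p m : ℕ) = (v : ℕ) + 1).card ≤ 1) ∧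
        -- i = number of leaves that are children of the root 0
        i = (Finset.univ.filter fun v : Fin n =>
              (Finset.univ.filter fun m : Fin n => (p m : ℕ) = (v : ℕ) + 1).card = 0 ∧
              (p v : ℕ) = 0).card ∧
        -- j = number of leaves that are not children of the root 0
        j = (Finset.univ.filter fun v : Fin n =>
              (Finset.univ.filter fun m : Fin n => (p m : ℕ) = (v : ℕ) + 1).card = 0 ∧
              (p v : ℕ) ≠ 0).card)).card := by
  rw [main n i j]
  congr 1
  have hset : FF n i j = Finset.univ.filter (fun p : Fin n → Fin (n + 1) =>
        (∀ m : Fin n, (p m : ℕ) ≤ (m : ℕ)) ∧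
        (∀ v : Fin n, (Finset.univ.filter fun m : Fin n => (p m : ℕ) = (v : ℕ) + 1).card ≤ 2) ∧
        (∀ v : Fin n, (p v : ℕ) = 0 →
          (Finset.univ.filter fun m : Fin n => (p m : ℕ) = (v : ℕ) + 1).card ≤ 1) ∧
        i = (Finset.univ.filter fun v : Fin n =>
              (Finset.univ.filter fun m : Fin n => (p m : ℕ) = (v : ℕ) + 1).card = 0 ∧
              (p v : ℕ) = 0).card ∧
        j = (Finset.univ.filter fun v : Fin n =>
              (Finset.univ.filter fun m : Fin n => (p m : ℕ) = (v : ℕ) + 1).card = 0 ∧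
              (p v : ℕ) ≠ 0).card) := by
    unfold FF
    refine Finset.filter_congr fun q _ => ?_
    simp only [isF, li, lj, dg]
    tauto
  rw [hset]
end

section
/- Let ℚ[x,u] be the polynomial ring in two variables and let D : ℚ[x,u] → ℚ[x,u] be the unique ℚ-linear derivation with D(x) = x·(u+x) and D(u) = 0. Then for every n ≥ 1, the n-th iterate satisfies Dⁿ(x) = (u+x) · Σ_{k=1}^{n} k! · S(n,k) · x^k · u^{n−k}, where S(n,k) denotes the Stirling number of the second kind, i.e., the number of partitions of {1,…,n} into k nonempty blocks. -/
open Finset MvPolynomial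

/-- Stirling numbers of the second kind, via the recurrence
`S(n+1,k+1) = (k+1)·S(n,k+1) + S(n,k)`, `S(0,0) = 1`, `S(0,k+1) = 0`, `S(n+1,0) = 0`;
`S(n,k)` counts the partitions of an `n`-element set into `k` nonempty blocks. -/
def stirling2 : ℕ → ℕ → ℕ
  | 0, 0 => 1
  | 0, _ + 1 => 0
  | _ + 1, 0 => 0
  | n + 1, k + 1 => (k + 1) * stirling2 n (k + 1) + stirling2 n k

lemma stirling2_eq_zero : ∀ {n k : ℕ}, n < k → stirling2 n k = 0
  | 0, 0, h => by omega
  | 0, k + 1, _ => rfl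
  | n + 1, 0, h => by omega
  | n + 1, k + 1, h => by
      rw [stirling2, stirling2_eq_zero (show n < k + 1 by omega),
        stirling2_eq_zero (show n < k by omega)]
      ring

lemma stirling2_zero_right {n : ℕ} (hn : 1 ≤ n) : stirling2 n 0 = 0 := by
  cases n with
  | zero => omega
  | succ n => rfl

lemma stir_rec (n k : ℕ) :
    (k + 1).factorial * stirling2 (n + 1) (k + 1) =
      (k + 1) * (k.factorial * stirling2 n k) +
        (k + 1) * ((k + 1).factorial * stirling2 n (k + 1)) := by
  rw [stirling2, Nat.factorial_succ]
  ring

/-- abbreviation for the summand -/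
noncomputable def tt (n k : ℕ) : MvPolynomial (Fin 2) ℚ :=
  C ((k.factorial * stirling2 n k : ℕ) : ℚ) * X 0 ^ k * X 1 ^ (n - k)

lemma D_mono (D : Derivation ℚ (MvPolynomial (Fin 2) ℚ) (MvPolynomial (Fin 2) ℚ))
    (hx : D (X 0) = X 0 * (X 1 + X 0)) (hu : D (X 1) = 0) (c : ℚ) (k m : ℕ) :
    D (C c * X 0 ^ k * X 1 ^ m) =
      (k : MvPolynomial (Fin 2) ℚ) * (C c * X 0 ^ k * X 1 ^ m) * (X 1 + X 0) := by
  have hC : D (C c) = 0 := by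
    rw [show (C c : MvPolynomial (Fin 2) ℚ) = algebraMap ℚ _ c from rfl,
      Derivation.map_algebraMap]
  cases k with
  | zero =>
    simp [Derivation.leibniz, Derivation.leibniz_pow, hu, hC, smul_eq_mul]
  | succ k =>
    simp only [Derivation.leibniz, Derivation.leibniz_pow, hu, hC, hx, smul_eq_mul]
    simp only [nsmul_eq_mul, mul_zero, smul_zero, add_zero, zero_add]
    push_cast
    rw [pow_succ]
    ring

lemma icc_range {n : ℕ} (hn : 1 ≤ n) :
    ∑ k ∈ Icc 1 n, tt n k = ∑ k ∈ range (n + 2), tt n k := by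
  apply Finset.sum_subset
  · intro k hk
    simp only [mem_Icc] at hk
    simp only [mem_range]
    omega
  · intro k hk hk'
    simp only [mem_range] at hk
    simp only [mem_Icc] at hk'
    have : stirling2 n k = 0 := by
      rcases Nat.eq_zero_or_pos k with h | h
      · subst h; exact stirling2_zero_right hn
      · exact stirling2_eq_zero (by omega)
    simp [tt, this]

lemma tt_succ (n k : ℕ) :
    tt (n + 1) (k + 1) =
      ((k : MvPolynomial (Fin 2) ℚ) + 1) * X 0 * tt n k +
        ((k : MvPolynomial (Fin 2) ℚ) + 1) * X 1 * tt n (k + 1) := by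
  by_cases hk : k + 1 ≤ n
  · have h1 : n + 1 - (k + 1) = n - (k + 1) + 1 := by omega
    have h2 : n - k = n - (k + 1) + 1 := by omega
    have hcoef : (((k + 1).factorial * stirling2 (n + 1) (k + 1) : ℕ) : ℚ) =
        ((k : ℚ) + 1) * ((k.factorial * stirling2 n k : ℕ) : ℚ) +
          ((k : ℚ) + 1) * (((k + 1).factorial * stirling2 n (k + 1) : ℕ) : ℚ) := by
      have := stir_rec n k
      push_cast [this]
      ring
    simp only [tt, h1, h2, hcoef, map_add, map_mul, map_natCast, map_one]
    ring
  · have hz1 : stirling2 n (k + 1) = 0 := stirling2_eq_zero (by omega)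
    by_cases hk2 : k = n
    · subst hk2
      have hcoef : (((k + 1).factorial * stirling2 (k + 1) (k + 1) : ℕ) : ℚ) =
          ((k : ℚ) + 1) * ((k.factorial * stirling2 k k : ℕ) : ℚ) := by
        have := stir_rec k k
        rw [hz1] at this
        push_cast [this]
        ring
      simp only [tt, hz1, hcoef, Nat.sub_self, Nat.cast_zero, mul_zero, map_zero,
        map_add, map_mul, map_natCast, map_one, zero_mul, pow_zero]
      ring
    · have hz0 : stirling2 n k = 0 := stirling2_eq_zero (by omega)
      have hz2 : stirling2 (n + 1) (k + 1) = 0 := stirling2_eq_zero (by omega)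
      simp [tt, hz0, hz1, hz2]

/-- In `ℚ[x,u]` with `x = X 0`, `u = X 1`: if `D` is the ℚ-linear derivation with
`D(x) = x(u+x)` and `D(u) = 0`, then for every `n ≥ 1`,
`Dⁿ(x) = (u+x) Σ_{k=1}^n k!·S(n,k)·x^k·u^{n−k}`. -/
theorem stmt9
    (D : Derivation ℚ (MvPolynomial (Fin 2) ℚ) (MvPolynomial (Fin 2) ℚ))
    (hx : D (X 0) = X 0 * (X 1 + X 0)) (hu : D (X 1) = 0)
    (n : ℕ) (hn : 1 ≤ n) :
    (⇑D)^[n] (X 0) =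
      (X 1 + X 0) *
        ∑ k ∈ Icc 1 n,
          MvPolynomial.C ((k.factorial * stirling2 n k : ℕ) : ℚ) * X 0 ^ k * X 1 ^ (n - k) := by
  induction n, hn using Nat.le_induction with
  | base =>
    show D (X 0) = (X 1 + X 0) * ∑ k ∈ Icc 1 1, tt 1 k
    rw [Icc_self, sum_singleton, hx]
    simp only [tt, stirling2, Nat.factorial_one, Nat.sub_self, pow_zero, pow_one]
    norm_num
    ring
  | succ n hn IH =>
    show (⇑D)^[n+1] (X 0) = (X 1 + X 0) * ∑ k ∈ Icc 1 (n+1), tt (n+1) k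
    have IH' : (⇑D)^[n] (X 0) = (X 1 + X 0) * ∑ k ∈ Icc 1 n, tt n k := IH
    rw [Function.iterate_succ_apply', IH', icc_range hn, icc_range (show 1 ≤ n+1 by omega)]
    have hD1 : D (X 1 + X 0) = X 0 * (X 1 + X 0) := by
      rw [map_add, hu, hx]; ring
    have hDsum : D (∑ k ∈ range (n + 2), tt n k) =
        (∑ k ∈ range (n + 2), (k : MvPolynomial (Fin 2) ℚ) * tt n k) * (X 1 + X 0) := by
      rw [map_sum, sum_mul]
      exact sum_congr rfl fun k _ => D_mono D hx hu _ k _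
    rw [Derivation.leibniz, hD1, hDsum, smul_eq_mul, smul_eq_mul]
    set A : MvPolynomial (Fin 2) ℚ := ∑ k ∈ range (n + 2), (k : MvPolynomial (Fin 2) ℚ) * tt n k with hA
    set B : MvPolynomial (Fin 2) ℚ := ∑ k ∈ range (n + 2), tt n k with hB
    suffices h : (∑ k ∈ range (n + 3), tt (n + 1) k) = (X 1 + X 0) * A + X 0 * B by
      rw [h]; ring
    rw [Finset.sum_range_succ']
    have h0 : tt (n + 1) 0 = 0 := by
      simp [tt, stirling2_zero_right (show 1 ≤ n + 1 by omega)]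
    rw [h0, add_zero]
    have hterm : ∀ k ∈ range (n + 2), tt (n + 1) (k + 1) =
        ((k : MvPolynomial (Fin 2) ℚ) + 1) * X 0 * tt n k +
          ((k : MvPolynomial (Fin 2) ℚ) + 1) * X 1 * tt n (k + 1) :=
      fun k _ => tt_succ n k
    rw [sum_congr rfl hterm, sum_add_distrib]
    have hshift : ∑ k ∈ range (n + 2),
        ((k : MvPolynomial (Fin 2) ℚ) + 1) * X 1 * tt n (k + 1) = X 1 * A := by
      rw [hA, mul_sum]
      rw [Finset.sum_range_succ
        (fun k => ((k : MvPolynomial (Fin 2) ℚ) + 1) * X 1 * tt n (k + 1)) (n + 1)]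
      rw [Finset.sum_range_succ' (fun k => X 1 * ((k : MvPolynomial (Fin 2) ℚ) * tt n k)) (n + 1)]
      have hz : tt n (n + 1 + 1) = 0 := by
        simp [tt, stirling2_eq_zero (show n < n + 2 by omega)]
      rw [hz]
      simp only [Nat.cast_zero, zero_mul, mul_zero, add_zero]
      exact sum_congr rfl fun k _ => by push_cast; ring
    have hX0 : ∑ k ∈ range (n + 2),
        ((k : MvPolynomial (Fin 2) ℚ) + 1) * X 0 * tt n k = X 0 * A + X 0 * B := by
      rw [hA, hB, mul_sum, mul_sum, ← sum_add_distrib]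
      exact sum_congr rfl fun k _ => by ring
    rw [hshift, hX0]
    ring
end

section
/- For every integer n ≥ 3, the number of increasing plane trees on {1,…,n} having exactly 2 vertices of degree 0 (leaves), exactly n−3 vertices of degree 1, and exactly 1 vertex of degree 2 equals 2ⁿ − 2n. -/
open Finset

/-- Increasing plane trees on `{1,…,n}`, encoded as pairs `(p, r)`: the vertex
`m ∈ {2,…,n}` is represented by the index `m-2 : Fin (n-1)` and the vertices `{1,…,n}`
by `Fin n` (vertex `v+1` for `v : Fin n`); `p` gives the parent (with `p(m) < m`) and `r`
the left-to-right position among siblings, a bijection onto `{0,…,deg−1}` over each vertex. -/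
def planeTrees (n : ℕ) : Finset ((Fin (n - 1) → Fin n) × (Fin (n - 1) → Fin n)) :=
  Finset.univ.filter fun pr =>
    (∀ m : Fin (n - 1), (pr.1 m : ℕ) ≤ (m : ℕ)) ∧
    (∀ v : Fin n,
      (Finset.univ.filter fun m : Fin (n - 1) => pr.1 m = v).image (fun m => (pr.2 m : ℕ)) =
        Finset.range (Finset.univ.filter fun m : Fin (n - 1) => pr.1 m = v).card)

/-- The number of vertices of degree `d` (i.e. with exactly `d` children) of an increasing
plane tree on `{1,…,n}`. -/
def degCount {n : ℕ} (pr : (Fin (n - 1) → Fin n) × (Fin (n - 1) → Fin n)) (d : ℕ) : ℕ :=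
  (Finset.univ.filter fun v : Fin n =>
    (Finset.univ.filter fun m : Fin (n - 1) => pr.1 m = v).card = d).card

def tailF (n k : ℕ) : Finset (Fin (n - 1)) := Finset.univ.filter fun m => k ≤ (m : ℕ)

def chainOf (n k : ℕ) (A : Finset (Fin (n - 1))) (m : Fin (n - 1)) : Finset (Fin (n - 1)) :=
  if m ∈ A then A else tailF n k \ A

def encP (n k : ℕ) (A : Finset (Fin (n - 1))) (m : Fin (n - 1)) : Fin n :=
  if (m : ℕ) < k then ⟨(m : ℕ), by have := m.2; omega⟩
  else
    if h : ((chainOf n k A m).filter (· < m)).Nonempty then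
      ⟨(((chainOf n k A m).filter (· < m)).max' h : ℕ) + 1,
        by have := (((chainOf n k A m).filter (· < m)).max' h).2; omega⟩
    else ⟨k % n, Nat.mod_lt _ (by have := m.2; omega)⟩

def encR (n k : ℕ) (A : Finset (Fin (n - 1))) (m : Fin (n - 1)) : Fin n :=
  if m ∉ A ∧ k ≤ (m : ℕ) ∧ ((tailF n k \ A).filter (· < m)) = ∅ then
    ⟨1 % n, Nat.mod_lt _ (by have := m.2; omega)⟩
  else ⟨0, by have := m.2; omega⟩

section Enc

variable {n k : ℕ} {A : Finset (Fin (n - 1))} {m : Fin (n - 1)}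

lemma mem_tailF : m ∈ tailF n k ↔ k ≤ (m : ℕ) := by simp [tailF]

lemma tailF_split (hm : k ≤ (m : ℕ)) : m ∈ A ∨ m ∈ tailF n k \ A := by
  by_cases h : m ∈ A
  · exact Or.inl h
  · exact Or.inr (mem_sdiff.2 ⟨mem_tailF.2 hm, h⟩)

lemma chainOf_sub (hA : A ⊆ tailF n k) (m : Fin (n - 1)) : chainOf n k A m ⊆ tailF n k := by
  unfold chainOf; split
  · exact hA
  · exact sdiff_subset

lemma chainOf_cases (m : Fin (n - 1)) :
    chainOf n k A m = A ∨ chainOf n k A m = tailF n k \ A := by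
  unfold chainOf; split
  · exact Or.inl rfl
  · exact Or.inr rfl

lemma chainOf_mem (hm : k ≤ (m : ℕ)) : m ∈ chainOf n k A m := by
  unfold chainOf; split
  · assumption
  · exact mem_sdiff.2 ⟨mem_tailF.2 hm, by assumption⟩

lemma chainOf_eq_of_mem {C : Finset (Fin (n - 1))} (hC : C = A ∨ C = tailF n k \ A)
    (hm : m ∈ C) : chainOf n k A m = C := by
  unfold chainOf
  rcases hC with rfl | rfl
  · rw [if_pos hm]
  · rw [if_neg (mem_sdiff.1 hm).2]

lemma chainOf_eq_of_mem' {C : Finset (Fin (n - 1))} {w : Fin (n - 1)}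
    (hC : C = A ∨ C = tailF n k \ A) (hwC : w ∈ C) (hw : w ∈ chainOf n k A m) :
    chainOf n k A m = C := by
  rcases chainOf_cases (A := A) (k := k) m with h | h <;> rcases hC with rfl | rfl
  · exact h
  · exfalso
    rw [h] at hw
    exact (mem_sdiff.1 hwC).2 hw
  · exfalso
    rw [h] at hw
    exact (mem_sdiff.1 hw).2 hwC
  · exact h

lemma encP_val_lt (hm : (m : ℕ) < k) : (encP n k A m : ℕ) = m := by
  unfold encP; rw [if_pos hm]

lemma encP_val_max (hm : ¬ (m : ℕ) < k) (h : ((chainOf n k A m).filter (· < m)).Nonempty) :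
    (encP n k A m : ℕ) = (((chainOf n k A m).filter (· < m)).max' h : ℕ) + 1 := by
  unfold encP; rw [if_neg hm, dif_pos h]

lemma encP_val_emp (hk : k < n) (hm : ¬ (m : ℕ) < k)
    (h : ¬ ((chainOf n k A m).filter (· < m)).Nonempty) :
    (encP n k A m : ℕ) = k := by
  unfold encP; rw [if_neg hm, dif_neg h]; exact Nat.mod_eq_of_lt hk

lemma encR_val_one (hn : 1 < n) (hm1 : m ∉ A) (hm2 : k ≤ (m : ℕ))
    (hm3 : (tailF n k \ A).filter (· < m) = ∅) : (encR n k A m : ℕ) = 1 := by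
  unfold encR; rw [if_pos ⟨hm1, hm2, hm3⟩]; exact Nat.mod_eq_of_lt hn

lemma encR_val_zero (h : ¬ (m ∉ A ∧ k ≤ (m : ℕ) ∧ (tailF n k \ A).filter (· < m) = ∅)) :
    (encR n k A m : ℕ) = 0 := by
  unfold encR; rw [if_neg h]

lemma encP_le (hA : A ⊆ tailF n k) (hk : k < n) (m : Fin (n - 1)) :
    (encP n k A m : ℕ) ≤ (m : ℕ) := by
  by_cases hm : (m : ℕ) < k
  · rw [encP_val_lt hm]
  · by_cases h : ((chainOf n k A m).filter (· < m)).Nonempty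
    · rw [encP_val_max hm h]
      have := mem_filter.1 (((chainOf n k A m).filter (· < m)).max'_mem h)
      have hlt : ((chainOf n k A m).filter (· < m)).max' h < m := this.2
      exact hlt
    · rw [encP_val_emp hk hm h]; omega

/-- children of a vertex `v` with `(v:ℕ) < k`. -/
lemma chSet_lt (hk : k + 3 ≤ n) (hA : A ⊆ tailF n k) (v : Fin n) (hv : (v : ℕ) < k) :
    (Finset.univ.filter fun m' : Fin (n - 1) => encP n k A m' = v) =
      {(⟨(v : ℕ), by omega⟩ : Fin (n - 1))} := by
  ext m'
  simp only [mem_filter, mem_univ, true_and, mem_singleton]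
  constructor
  · intro h
    have hval : (encP n k A m' : ℕ) = (v : ℕ) := by rw [h]
    by_cases hc : (m' : ℕ) < k
    · rw [encP_val_lt hc] at hval
      exact Fin.ext (show (m' : ℕ) = (v : ℕ) by omega)
    · exfalso
      by_cases hne : ((chainOf n k A m').filter (· < m')).Nonempty
      · rw [encP_val_max hc hne] at hval
        have hmm := mem_filter.1 (((chainOf n k A m').filter (· < m')).max'_mem hne)
        have := mem_tailF.1 (chainOf_sub hA m' hmm.1)
        omega
      · rw [encP_val_emp (by omega) hc hne] at hval; omega
  · rintro rfl
    refine Fin.ext ?_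
    show (encP n k A _ : ℕ) = (v : ℕ)
    exact encP_val_lt hv

/-- children of the branch vertex `k`. -/
lemma chSet_k (hk : k + 3 ≤ n) (hA : A ⊆ tailF n k) (hAne : A.Nonempty)
    (hBne : (tailF n k \ A).Nonempty) :
    (Finset.univ.filter fun m' : Fin (n - 1) => encP n k A m' = (⟨k, by omega⟩ : Fin n)) =
      {A.min' hAne, (tailF n k \ A).min' hBne} := by
  ext m'
  simp only [mem_filter, mem_univ, true_and, mem_insert, mem_singleton]
  constructor
  · intro h
    have hval : (encP n k A m' : ℕ) = k := by rw [h]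
    by_cases hc : (m' : ℕ) < k
    · rw [encP_val_lt hc] at hval; omega
    · by_cases hne : ((chainOf n k A m').filter (· < m')).Nonempty
      · exfalso
        rw [encP_val_max hc hne] at hval
        have hmm := mem_filter.1 (((chainOf n k A m').filter (· < m')).max'_mem hne)
        have := mem_tailF.1 (chainOf_sub hA m' hmm.1)
        omega
      · have hfe : (chainOf n k A m').filter (· < m') = ∅ := not_nonempty_iff_eq_empty.1 hne
        have hEmpAll : ∀ x ∈ chainOf n k A m', ¬ x < m' := by
          intro x hx
          exact (filter_eq_empty_iff.1 hfe) hx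
        rcases tailF_split (A := A) (by omega : k ≤ (m' : ℕ)) with hmA | hmB
        · left
          have hco : chainOf n k A m' = A := chainOf_eq_of_mem (Or.inl rfl) hmA
          rw [hco] at hEmpAll
          exact le_antisymm (not_lt.1 (hEmpAll _ (A.min'_mem hAne))) (A.min'_le m' hmA)
        · right
          have hco : chainOf n k A m' = tailF n k \ A := chainOf_eq_of_mem (Or.inr rfl) hmB
          rw [hco] at hEmpAll
          exact le_antisymm (not_lt.1 (hEmpAll _ ((tailF n k \ A).min'_mem hBne)))
            ((tailF n k \ A).min'_le m' hmB)
  · intro h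
    have h1n : 1 ≤ n := by omega
    rcases h with rfl | rfl
    · have hmA := A.min'_mem hAne
      have htl : k ≤ (A.min' hAne : ℕ) := mem_tailF.1 (hA hmA)
      have hco : chainOf n k A (A.min' hAne) = A := chainOf_eq_of_mem (Or.inl rfl) hmA
      have hfe : ¬ ((chainOf n k A (A.min' hAne)).filter (· < A.min' hAne)).Nonempty := by
        rw [hco]
        rw [not_nonempty_iff_eq_empty, filter_eq_empty_iff]
        intro x hx
        exact not_lt.2 (A.min'_le x hx)
      exact Fin.ext (show (encP n k A _ : ℕ) = k from encP_val_emp (by omega) (by omega) hfe)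
    · have hmB := (tailF n k \ A).min'_mem hBne
      have htl : k ≤ ((tailF n k \ A).min' hBne : ℕ) := mem_tailF.1 (mem_sdiff.1 hmB).1
      have hco : chainOf n k A ((tailF n k \ A).min' hBne) = tailF n k \ A :=
        chainOf_eq_of_mem (Or.inr rfl) hmB
      have hfe : ¬ ((chainOf n k A ((tailF n k \ A).min' hBne)).filter
          (· < (tailF n k \ A).min' hBne)).Nonempty := by
        rw [hco, not_nonempty_iff_eq_empty, filter_eq_empty_iff]
        intro x hx
        exact not_lt.2 ((tailF n k \ A).min'_le x hx)
      exact Fin.ext (show (encP n k A _ : ℕ) = k from encP_val_emp (by omega) (by omega) hfe)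

/-- at most one child for vertices above the branch. -/
lemma chSet_gt_le_one (hk : k + 3 ≤ n) (hA : A ⊆ tailF n k) (v : Fin n) (hv : k < (v : ℕ)) :
    (Finset.univ.filter fun m' : Fin (n - 1) => encP n k A m' = v).card ≤ 1 := by
  rw [card_le_one]
  intro a ha b hb
  obtain ⟨-, ha⟩ := mem_filter.1 ha
  obtain ⟨-, hb⟩ := mem_filter.1 hb
  -- analyze a
  have key : ∀ c : Fin (n - 1), encP n k A c = v → ¬ (c : ℕ) < k ∧
      ∃ h : ((chainOf n k A c).filter (· < c)).Nonempty,
        ((((chainOf n k A c).filter (· < c)).max' h : ℕ)) + 1 = (v : ℕ) := by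
    intro c hc
    have hval : (encP n k A c : ℕ) = (v : ℕ) := by rw [hc]
    have hck : ¬ (c : ℕ) < k := by
      intro hlt
      rw [encP_val_lt hlt] at hval; omega
    refine ⟨hck, ?_⟩
    by_cases hne : ((chainOf n k A c).filter (· < c)).Nonempty
    · exact ⟨hne, by rw [encP_val_max hck hne] at hval; omega⟩
    · rw [encP_val_emp (by omega) hck hne] at hval; omega
  obtain ⟨hak, hane, haval⟩ := key a ha
  obtain ⟨hbk, hbne, hbval⟩ := key b hb
  set wa := ((chainOf n k A a).filter (· < a)).max' hane with hwa
  set wb := ((chainOf n k A b).filter (· < b)).max' hbne with hwb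
  have hweq : wa = wb := Fin.ext (by omega)
  have hwaa := mem_filter.1 (((chainOf n k A a).filter (· < a)).max'_mem hane)
  have hwbb := mem_filter.1 (((chainOf n k A b).filter (· < b)).max'_mem hbne)
  rw [← hwa] at hwaa
  rw [← hwb] at hwbb
  have hchains : chainOf n k A a = chainOf n k A b := by
    rcases chainOf_cases (A := A) (k := k) a with h1 | h1
    · rw [h1]
      exact (chainOf_eq_of_mem' (Or.inl rfl) (h1 ▸ hwaa.1) (hweq ▸ hwbb.1)).symm
    · rw [h1]
      exact (chainOf_eq_of_mem' (Or.inr rfl) (h1 ▸ hwaa.1) (hweq ▸ hwbb.1)).symm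
  have haC : a ∈ chainOf n k A a := chainOf_mem (by omega)
  have hbC : b ∈ chainOf n k A a := hchains ▸ chainOf_mem (by omega)
  by_contra hab
  rcases lt_or_gt_of_ne hab with h | h
  · have : a ∈ (chainOf n k A b).filter (· < b) := mem_filter.2 ⟨hchains ▸ haC, h⟩
    have := ((chainOf n k A b).filter (· < b)).le_max' a this
    rw [← hwb, ← hweq] at this
    have := hwaa.2
    have h2 : wa < a := hwaa.2
    omega
  · have : b ∈ (chainOf n k A a).filter (· < a) := mem_filter.2 ⟨hbC, h⟩
    have := ((chainOf n k A a).filter (· < a)).le_max' b this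
    rw [← hwa] at this
    have h2 : wb < b := hwbb.2
    rw [← hweq] at h2
    omega

/-- nonemptiness characterization for `v > k`: children of `v` exist iff `v-1` is not
the top of its chain. -/
lemma chSet_gt_char (hk : k + 3 ≤ n) (hA : A ⊆ tailF n k) (C : Finset (Fin (n - 1)))
    (hC : C = A ∨ C = tailF n k \ A) (v : Fin n) (hv : k < (v : ℕ))
    (hw : (⟨(v : ℕ) - 1, by have := v.2; omega⟩ : Fin (n - 1)) ∈ C) :
    (Finset.univ.filter fun m' : Fin (n - 1) => encP n k A m' = v).Nonempty ↔
      (C.filter (fun a => (⟨(v : ℕ) - 1, by have := v.2; omega⟩ : Fin (n - 1)) < a)).Nonempty := by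
  set w : Fin (n - 1) := ⟨(v : ℕ) - 1, by have := v.2; omega⟩ with hwdef
  have hCsub : C ⊆ tailF n k := by
    rcases hC with rfl | rfl
    · exact hA
    · exact sdiff_subset
  constructor
  · rintro ⟨m', hm'⟩
    obtain ⟨-, hm'⟩ := mem_filter.1 hm'
    have hval : (encP n k A m' : ℕ) = (v : ℕ) := by rw [hm']
    have hck : ¬ (m' : ℕ) < k := by
      intro hlt
      rw [encP_val_lt hlt] at hval; omega
    by_cases hne : ((chainOf n k A m').filter (· < m')).Nonempty
    · rw [encP_val_max hck hne] at hval
      set wa := ((chainOf n k A m').filter (· < m')).max' hne with hwa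
      have hwaa := mem_filter.1 (((chainOf n k A m').filter (· < m')).max'_mem hne)
      rw [← hwa] at hwaa
      have hweq : wa = w := Fin.ext (by simp [hwdef]; omega)
      have hco : chainOf n k A m' = C := chainOf_eq_of_mem' hC hw (hweq ▸ hwaa.1)
      have hm'C : m' ∈ C := hco ▸ chainOf_mem (by omega)
      refine ⟨m', mem_filter.2 ⟨hm'C, ?_⟩⟩
      have := hwaa.2
      rw [hweq] at this
      exact this
    · rw [encP_val_emp (by omega) hck hne] at hval; omega
  · rintro ⟨a, ha⟩
    obtain ⟨haC, hwa⟩ := mem_filter.1 ha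
    have hne : (C.filter (fun x => w < x)).Nonempty := ⟨a, mem_filter.2 ⟨haC, hwa⟩⟩
    set m' := (C.filter (fun x => w < x)).min' hne with hm'def
    have hm'mem := mem_filter.1 ((C.filter (fun x => w < x)).min'_mem hne)
    rw [← hm'def] at hm'mem
    obtain ⟨hm'C, hwm'⟩ := hm'mem
    have htl : k ≤ (m' : ℕ) := mem_tailF.1 (hCsub hm'C)
    have hco : chainOf n k A m' = C := chainOf_eq_of_mem hC hm'C
    have hfne : ((chainOf n k A m').filter (· < m')).Nonempty := by
      rw [hco]
      exact ⟨w, mem_filter.2 ⟨hw, hwm'⟩⟩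
    refine ⟨m', mem_filter.2 ⟨mem_univ _, ?_⟩⟩
    have hmax : ((chainOf n k A m').filter (· < m')).max' hfne = w := by
      apply le_antisymm
      · have hmm := mem_filter.1 (((chainOf n k A m').filter (· < m')).max'_mem hfne)
        have hsub : chainOf n k A m' ⊆ C := by rw [hco]
        by_contra hgt
        push_neg at hgt
        have : ((chainOf n k A m').filter (· < m')).max' hfne ∈ C.filter (fun x => w < x) :=
          mem_filter.2 ⟨hsub hmm.1, hgt⟩
        have h1 := (C.filter (fun x => w < x)).min'_le _ this
        rw [← hm'def] at h1
        have h2 := hmm.2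
        have h3 : (m' : ℕ) ≤ (((chainOf n k A m').filter (· < m')).max' hfne : ℕ) := h1
        have h4 : (((chainOf n k A m').filter (· < m')).max' hfne : ℕ) < (m' : ℕ) := h2
        omega
      · exact ((chainOf n k A m').filter (· < m')).le_max' w
          (mem_filter.2 ⟨hco ▸ hw, hwm'⟩)
    apply Fin.ext
    rw [encP_val_max (by omega) hfne, hmax]
    show ((v : ℕ) - 1) + 1 = (v : ℕ)
    omega

/-- ranks of children of vertices above the branch are `0`. -/
lemma encR_zero_of_gt (hk : k + 3 ≤ n) (hA : A ⊆ tailF n k) (v : Fin n) (hv : k < (v : ℕ))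
    (m' : Fin (n - 1)) (h : encP n k A m' = v) : (encR n k A m' : ℕ) = 0 := by
  have hval : (encP n k A m' : ℕ) = (v : ℕ) := by rw [h]
  have hck : ¬ (m' : ℕ) < k := by
    intro hlt
    rw [encP_val_lt hlt] at hval; omega
  have hne : ((chainOf n k A m').filter (· < m')).Nonempty := by
    by_contra hne
    rw [encP_val_emp (by omega) hck hne] at hval; omega
  by_cases hmA : m' ∈ A
  · exact encR_val_zero (by simp [hmA])
  · apply encR_val_zero
    rintro ⟨-, -, hemp⟩
    have hco : chainOf n k A m' = tailF n k \ A := by unfold chainOf; rw [if_neg hmA]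
    rw [hco, hemp] at hne
    simp at hne

lemma enc_card_le_two (hk : k + 3 ≤ n) (hA : A ⊆ tailF n k) (hAne : A.Nonempty)
    (hBne : (tailF n k \ A).Nonempty) (v : Fin n) :
    (Finset.univ.filter fun m' : Fin (n - 1) => encP n k A m' = v).card ≤ 2 := by
  rcases lt_trichotomy (v : ℕ) k with h | h | h
  · rw [chSet_lt hk hA v h]; simp
  · have hv : v = ⟨k, by omega⟩ := Fin.ext h
    rw [hv, chSet_k hk hA hAne hBne]
    exact le_trans (card_insert_le _ _) (by simp)
  · exact le_trans (chSet_gt_le_one hk hA v h) (by omega)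

lemma enc_deg2set (hk : k + 3 ≤ n) (hA : A ⊆ tailF n k) (hAne : A.Nonempty)
    (hBne : (tailF n k \ A).Nonempty) :
    (Finset.univ.filter fun v : Fin n =>
        (Finset.univ.filter fun m' : Fin (n - 1) => encP n k A m' = v).card = 2) =
      {(⟨k, by omega⟩ : Fin n)} := by
  ext v
  simp only [mem_filter, mem_univ, true_and, mem_singleton]
  constructor
  · intro h
    rcases lt_trichotomy (v : ℕ) k with hv | hv | hv
    · rw [chSet_lt hk hA v hv] at h; simp at h
    · exact Fin.ext hv
    · have := chSet_gt_le_one hk hA v hv; omega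
  · rintro rfl
    rw [chSet_k hk hA hAne hBne, card_insert_of_notMem, card_singleton]
    simp only [mem_singleton]
    intro hmm
    have h1 := A.min'_mem hAne
    have h2 := (tailF n k \ A).min'_mem hBne
    rw [← hmm] at h2
    exact (mem_sdiff.1 h2).2 h1

lemma enc_deg0_helper1 (hk : k + 3 ≤ n) (hA : A ⊆ tailF n k) (C : Finset (Fin (n - 1)))
    (hC : C = A ∨ C = tailF n k \ A) (hCne : C.Nonempty) :
    (Finset.univ.filter fun m' : Fin (n - 1) =>
      encP n k A m' = (⟨(C.max' hCne : ℕ) + 1, by have := (C.max' hCne).2; omega⟩ : Fin n)).card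
        = 0 := by
  have hCsub : C ⊆ tailF n k := by
    rcases hC with rfl | rfl
    · exact hA
    · exact sdiff_subset
  have hkm : k ≤ (C.max' hCne : ℕ) := mem_tailF.1 (hCsub (C.max'_mem hCne))
  have hv : k < ((⟨(C.max' hCne : ℕ) + 1, by have := (C.max' hCne).2; omega⟩ : Fin n) : ℕ) := by
    show k < (C.max' hCne : ℕ) + 1
    omega
  have hweq : (⟨((⟨(C.max' hCne : ℕ) + 1, by have := (C.max' hCne).2; omega⟩ : Fin n) : ℕ) - 1,
      by have := (C.max' hCne).2; omega⟩ : Fin (n - 1)) = C.max' hCne := Fin.ext rfl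
  rw [card_eq_zero, ← not_nonempty_iff_eq_empty,
    chSet_gt_char hk hA C hC _ hv (C.max'_mem hCne)]
  rintro ⟨a, ha⟩
  obtain ⟨haC, hlt⟩ := mem_filter.1 ha
  rw [hweq] at hlt
  exact absurd (lt_of_lt_of_le hlt (C.le_max' a haC)) (lt_irrefl _)

lemma enc_deg0_helper2 (hk : k + 3 ≤ n) (hA : A ⊆ tailF n k) (C : Finset (Fin (n - 1)))
    (hC : C = A ∨ C = tailF n k \ A) (hCne : C.Nonempty) (v : Fin n) (hv : k < (v : ℕ))
    (hw : (⟨(v : ℕ) - 1, by have := v.2; omega⟩ : Fin (n - 1)) ∈ C)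
    (h : (Finset.univ.filter fun m' : Fin (n - 1) => encP n k A m' = v).card = 0) :
    v = (⟨(C.max' hCne : ℕ) + 1, by have := (C.max' hCne).2; omega⟩ : Fin n) := by
  have hchar := chSet_gt_char hk hA C hC v hv hw
  have hemp : ¬ (C.filter (fun a => (⟨(v : ℕ) - 1, by have := v.2; omega⟩ : Fin (n - 1)) < a)).Nonempty := by
    intro hne
    obtain ⟨x, hx⟩ := hchar.2 hne
    rw [card_eq_zero.1 h] at hx
    simp at hx
  have h2 : C.max' hCne ≤ (⟨(v : ℕ) - 1, by have := v.2; omega⟩ : Fin (n - 1)) := by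
    by_contra hgt
    push_neg at hgt
    exact hemp ⟨C.max' hCne, mem_filter.2 ⟨C.max'_mem hCne, hgt⟩⟩
  have h3 := C.le_max' _ hw
  have heq := le_antisymm h3 h2
  have hval : (v : ℕ) - 1 = (C.max' hCne : ℕ) := by
    have := congrArg Fin.val heq
    exact this
  exact Fin.ext (by show (v : ℕ) = (C.max' hCne : ℕ) + 1; omega)

lemma enc_deg0set (hk : k + 3 ≤ n) (hA : A ⊆ tailF n k) (hAne : A.Nonempty)
    (hBne : (tailF n k \ A).Nonempty) :
    (Finset.univ.filter fun v : Fin n =>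
        (Finset.univ.filter fun m' : Fin (n - 1) => encP n k A m' = v).card = 0) =
      {(⟨(A.max' hAne : ℕ) + 1, by have := (A.max' hAne).2; omega⟩ : Fin n),
       (⟨((tailF n k \ A).max' hBne : ℕ) + 1,
          by have := ((tailF n k \ A).max' hBne).2; omega⟩ : Fin n)} := by
  ext v
  simp only [mem_filter, mem_univ, true_and, mem_insert, mem_singleton]
  constructor
  · intro h
    rcases lt_trichotomy (v : ℕ) k with hv | hv | hv
    · rw [chSet_lt hk hA v hv] at h; simp at h
    · exfalso
      have hveq : v = ⟨k, by omega⟩ := Fin.ext hv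
      rw [hveq, chSet_k hk hA hAne hBne] at h
      simp at h
    · have hwt : k ≤ ((⟨(v : ℕ) - 1, by have := v.2; omega⟩ : Fin (n - 1)) : ℕ) := by
        show k ≤ (v : ℕ) - 1
        omega
      rcases tailF_split (A := A) hwt with hwA | hwB
      · exact Or.inl (enc_deg0_helper2 hk hA A (Or.inl rfl) hAne v hv hwA h)
      · exact Or.inr (enc_deg0_helper2 hk hA _ (Or.inr rfl) hBne v hv hwB h)
  · intro h
    rcases h with rfl | rfl
    · exact enc_deg0_helper1 hk hA A (Or.inl rfl) hAne
    · exact enc_deg0_helper1 hk hA _ (Or.inr rfl) hBne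

lemma min'_ne (hAne : A.Nonempty) (hBne : (tailF n k \ A).Nonempty) :
    A.min' hAne ≠ (tailF n k \ A).min' hBne := by
  intro hmm
  have h1 := A.min'_mem hAne
  have h2 := (tailF n k \ A).min'_mem hBne
  rw [← hmm] at h2
  exact (mem_sdiff.1 h2).2 h1

lemma max'_ne (hAne : A.Nonempty) (hBne : (tailF n k \ A).Nonempty) :
    A.max' hAne ≠ (tailF n k \ A).max' hBne := by
  intro hmm
  have h1 := A.max'_mem hAne
  have h2 := (tailF n k \ A).max'_mem hBne
  rw [← hmm] at h2
  exact (mem_sdiff.1 h2).2 h1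

lemma enc_mem (hk : k + 3 ≤ n) (hA : A ⊆ tailF n k) (hAne : A.Nonempty)
    (hBne : (tailF n k \ A).Nonempty) :
    (encP n k A, encR n k A) ∈ (planeTrees n).filter fun pr =>
        degCount pr 0 = 2 ∧ degCount pr 1 = n - 3 ∧ degCount pr 2 = 1 := by
  rw [mem_filter]
  refine ⟨?_, ?_, ?_, ?_⟩
  · rw [planeTrees, mem_filter]
    refine ⟨mem_univ _, fun m => encP_le hA (by omega) m, ?_⟩
    intro v
    show (Finset.univ.filter fun m : Fin (n - 1) => encP n k A m = v).image
        (fun m => (encR n k A m : ℕ)) =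
      Finset.range (Finset.univ.filter fun m : Fin (n - 1) => encP n k A m = v).card
    rcases lt_trichotomy (v : ℕ) k with hv | hv | hv
    · rw [chSet_lt hk hA v hv, image_singleton, card_singleton, range_one]
      congr 1
      refine encR_val_zero ?_
      rintro ⟨-, h2, -⟩
      exact absurd h2 (not_le.2 hv)
    · have hveq : v = ⟨k, by omega⟩ := Fin.ext hv
      rw [hveq, chSet_k hk hA hAne hBne, image_insert, image_singleton,
        card_insert_of_notMem (by simpa using min'_ne hAne hBne), card_singleton]
      have e1 : (encR n k A (A.min' hAne) : ℕ) = 0 := by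
        refine encR_val_zero ?_
        rintro ⟨h1, -⟩
        exact h1 (A.min'_mem hAne)
      have e2 : (encR n k A ((tailF n k \ A).min' hBne) : ℕ) = 1 := by
        refine encR_val_one (by omega) (mem_sdiff.1 ((tailF n k \ A).min'_mem hBne)).2
          (mem_tailF.1 (mem_sdiff.1 ((tailF n k \ A).min'_mem hBne)).1) ?_
        rw [filter_eq_empty_iff]
        intro x hx
        exact not_lt.2 ((tailF n k \ A).min'_le x hx)
      rw [e1, e2]
      ext x
      simp only [mem_insert, mem_singleton, mem_range]
      omega
    · have hle := chSet_gt_le_one hk hA v hv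
      rcases Nat.le_one_iff_eq_zero_or_eq_one.1 hle with hc | hc
      · rw [card_eq_zero] at hc
        rw [hc]
        simp
      · obtain ⟨m', hm'⟩ := card_eq_one.1 hc
        rw [hm', image_singleton, card_singleton, range_one]
        congr 1
        refine encR_zero_of_gt hk hA v hv m' ?_
        have : m' ∈ Finset.univ.filter fun m : Fin (n - 1) => encP n k A m = v := by
          rw [hm']; exact mem_singleton_self m'
        exact (mem_filter.1 this).2
  · show (Finset.univ.filter fun v : Fin n =>
        (Finset.univ.filter fun m : Fin (n - 1) => encP n k A m = v).card = 0).card = 2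
    rw [enc_deg0set hk hA hAne hBne, card_insert_of_notMem, card_singleton]
    simp only [mem_singleton]
    intro hmm
    rw [Fin.mk.injEq] at hmm
    exact max'_ne hAne hBne (Fin.ext (by omega))
  · show (Finset.univ.filter fun v : Fin n =>
        (Finset.univ.filter fun m : Fin (n - 1) => encP n k A m = v).card = 1).card = n - 3
    have hset : (Finset.univ.filter fun v : Fin n =>
        (Finset.univ.filter fun m : Fin (n - 1) => encP n k A m = v).card = 1) =
        Finset.univ \ ((Finset.univ.filter fun v : Fin n =>
          (Finset.univ.filter fun m : Fin (n - 1) => encP n k A m = v).card = 0) ∪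
        (Finset.univ.filter fun v : Fin n =>
          (Finset.univ.filter fun m : Fin (n - 1) => encP n k A m = v).card = 2)) := by
      ext v
      have := enc_card_le_two hk hA hAne hBne v
      simp only [mem_filter, mem_univ, true_and, mem_sdiff, mem_union]
      omega
    have hdisj : Disjoint
        (Finset.univ.filter fun v : Fin n =>
          (Finset.univ.filter fun m : Fin (n - 1) => encP n k A m = v).card = 0)
        (Finset.univ.filter fun v : Fin n =>
          (Finset.univ.filter fun m : Fin (n - 1) => encP n k A m = v).card = 2) := by
      rw [disjoint_left]
      intro v h0 h2
      rw [mem_filter] at h0 h2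
      omega
    have hns : (⟨(A.max' hAne : ℕ) + 1, by have := (A.max' hAne).2; omega⟩ : Fin n) ∉
        ({(⟨((tailF n k \ A).max' hBne : ℕ) + 1,
          by have := ((tailF n k \ A).max' hBne).2; omega⟩ : Fin n)} : Finset (Fin n)) := by
      simp only [mem_singleton]
      intro hmm
      rw [Fin.mk.injEq] at hmm
      exact max'_ne hAne hBne (Fin.ext (by omega))
    rw [hset, card_sdiff_of_subset (subset_univ _), card_union_of_disjoint hdisj,
      enc_deg0set hk hA hAne hBne, enc_deg2set hk hA hAne hBne,
      card_insert_of_notMem hns, card_singleton, card_singleton, card_univ, Fintype.card_fin]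
  · show (Finset.univ.filter fun v : Fin n =>
        (Finset.univ.filter fun m : Fin (n - 1) => encP n k A m = v).card = 2).card = 1
    rw [enc_deg2set hk hA hAne hBne, card_singleton]

def colA (n : ℕ) (p r : Fin (n - 1) → Fin n) (b : ℕ) (m : ℕ) : ℕ :=
  if hm : m < n - 1 then
    if (p ⟨m, hm⟩ : ℕ) = b ∨ (p ⟨m, hm⟩ : ℕ) = 0 ∨ m ≤ (p ⟨m, hm⟩ : ℕ) - 1 then
      (r ⟨m, hm⟩ : ℕ)
    else colA n p r b ((p ⟨m, hm⟩ : ℕ) - 1)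
  else 0
termination_by m
decreasing_by omega

lemma colA_base {n : ℕ} (p r : Fin (n-1) → Fin n) (b : ℕ) (m : Fin (n-1))
    (h : (p m : ℕ) = b) : colA n p r b (m : ℕ) = (r m : ℕ) := by
  rw [colA, dif_pos m.2]
  have hc : ((p (⟨(m : ℕ), m.2⟩ : Fin (n-1)) : ℕ) = b ∨ (p (⟨(m : ℕ), m.2⟩ : Fin (n-1)) : ℕ) = 0
      ∨ (m : ℕ) ≤ (p (⟨(m : ℕ), m.2⟩ : Fin (n-1)) : ℕ) - 1) := Or.inl h
  rw [if_pos hc]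

lemma colA_step {n : ℕ} (p r : Fin (n-1) → Fin n) (b : ℕ) (m : Fin (n-1))
    (hne : (p m : ℕ) ≠ b) (h1 : b + 1 ≤ (p m : ℕ)) (h2 : (p m : ℕ) ≤ (m : ℕ)) :
    colA n p r b (m : ℕ) = colA n p r b ((p m : ℕ) - 1) := by
  rw [colA, dif_pos m.2]
  have hc : ¬ ((p (⟨(m : ℕ), m.2⟩ : Fin (n-1)) : ℕ) = b ∨ (p (⟨(m : ℕ), m.2⟩ : Fin (n-1)) : ℕ) = 0
      ∨ (m : ℕ) ≤ (p (⟨(m : ℕ), m.2⟩ : Fin (n-1)) : ℕ) - 1) := by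
    have hEq : (⟨(m : ℕ), m.2⟩ : Fin (n-1)) = m := rfl
    rw [hEq]
    push_neg
    exact ⟨hne, by omega, by omega⟩
  rw [if_neg hc]

lemma chain_min {α : Type*} [LinearOrder α] (C : Finset α) (c : α) (hc : c ∈ C) (f : α → α)
    (hf : ∀ a ∈ C, a ≠ c → f a ∈ C ∧ f a < a) : ∀ a ∈ C, c ≤ a := by
  intro a ha
  have hCne : C.Nonempty := ⟨c, hc⟩
  have hmem := C.min'_mem hCne
  have : C.min' hCne = c := by
    by_contra h
    obtain ⟨h1, h2⟩ := hf _ hmem h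
    exact absurd (C.min'_le _ h1) (not_le.2 h2)
  calc c = C.min' hCne := this.symm
    _ ≤ a := C.min'_le _ ha

lemma chain_struct {α : Type*} [LinearOrder α] (C : Finset α) (c : α) (hc : c ∈ C) (f : α → α)
    (hf : ∀ a ∈ C, a ≠ c → f a ∈ C ∧ f a < a)
    (hinj : ∀ a ∈ C, ∀ b ∈ C, a ≠ c → b ≠ c → f a = f b → a = b) :
    ∀ x ∈ C, x ≠ c → ∃ h : (C.filter (· < x)).Nonempty,
      f x = (C.filter (· < x)).max' h := by
  intro x hx hxc
  obtain ⟨hfx, hlt⟩ := hf x hx hxc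
  have hne : (C.filter (· < x)).Nonempty := ⟨f x, mem_filter.2 ⟨hfx, hlt⟩⟩
  refine ⟨hne, ?_⟩
  set T := C.filter (· < x) with hT
  set S := (C.filter (· ≤ x)).erase c with hS
  have hmaps : ∀ a ∈ S, f a ∈ T := by
    intro a haS
    obtain ⟨hane, ha⟩ := mem_erase.1 haS
    obtain ⟨haC, hax⟩ := mem_filter.1 ha
    obtain ⟨h1, h2⟩ := hf a haC hane
    exact mem_filter.2 ⟨h1, lt_of_lt_of_le h2 hax⟩
  have hinjS : Set.InjOn f S := by
    intro a haS b hbS hab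
    obtain ⟨hane, ha⟩ := mem_erase.1 haS
    obtain ⟨hbne, hb⟩ := mem_erase.1 hbS
    exact hinj a (mem_filter.1 ha).1 b (mem_filter.1 hb).1 hane hbne hab
  have hcx : c ∈ C.filter (· ≤ x) :=
    mem_filter.2 ⟨hc, chain_min C c hc f hf x hx⟩
  have hfle : C.filter (· ≤ x) = insert x T := by
    ext a
    rw [hT]
    simp only [mem_filter, mem_insert]
    constructor
    · rintro ⟨h1, h2⟩
      rcases eq_or_lt_of_le h2 with h | h
      · exact Or.inl h
      · exact Or.inr ⟨h1, h⟩
    · rintro (rfl | ⟨h1, h2⟩)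
      · exact ⟨hx, le_refl _⟩
      · exact ⟨h1, le_of_lt h2⟩
  have hxT : x ∉ T := by simp [hT]
  have hcardS : S.card = T.card := by
    rw [hS, card_erase_of_mem hcx, hfle, card_insert_of_notMem hxT]
    omega
  have himg : S.image f = T := by
    apply eq_of_subset_of_card_le
    · intro y hy
      obtain ⟨a, haS, rfl⟩ := mem_image.1 hy
      exact hmaps a haS
    · rw [card_image_of_injOn hinjS, hcardS]
  have hwmem : T.max' hne ∈ S.image f := by rw [himg]; exact T.max'_mem hne
  obtain ⟨u, huS, hfu⟩ := mem_image.1 hwmem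
  by_cases hux : u = x
  · rw [← hfu, hux]
  · exfalso
    obtain ⟨hune, hu⟩ := mem_erase.1 huS
    obtain ⟨huC, hux'⟩ := mem_filter.1 hu
    have huT : u ∈ T := mem_filter.2 ⟨huC, lt_of_le_of_ne hux' hux⟩
    have h1 : u ≤ T.max' hne := T.le_max' u huT
    have h2 : f u < u := (hf u huC hune).2
    rw [hfu] at h2
    exact absurd h1 (not_le.2 h2)

lemma sum_pow_aux (t : ℕ) :
    2 * t + 4 ≤ 2 ^ (t + 2) ∧ ∑ k ∈ Finset.range t, (2 ^ (k + 2) - 2) = 2 ^ (t + 2) - 2 * t - 4 := by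
  induction t with
  | zero => simp
  | succ t ih =>
    obtain ⟨h1, h2⟩ := ih
    have hp : 2 ^ (t + 1 + 2) = 2 * 2 ^ (t + 2) := by ring
    constructor
    · omega
    · rw [Finset.sum_range_succ, h2, hp]; omega

lemma max'_congr {α : Type*} [LinearOrder α] {s t : Finset α} (h : s = t) (hs : s.Nonempty)
    (ht : t.Nonempty) : s.max' hs = t.max' ht := by subst h; rfl

lemma tree_surj (n : ℕ) (hn : 3 ≤ n) (p r : Fin (n-1) → Fin n)
    (hp : ∀ m : Fin (n-1), (p m : ℕ) ≤ (m : ℕ))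
    (hr : ∀ v : Fin n, (Finset.univ.filter fun m : Fin (n-1) => p m = v).image
        (fun m => (r m : ℕ)) =
      Finset.range (Finset.univ.filter fun m : Fin (n-1) => p m = v).card)
    (h0 : (Finset.univ.filter fun v : Fin n =>
        (Finset.univ.filter fun m : Fin (n-1) => p m = v).card = 0).card = 2)
    (h1 : (Finset.univ.filter fun v : Fin n =>
        (Finset.univ.filter fun m : Fin (n-1) => p m = v).card = 1).card = n - 3)
    (h2 : (Finset.univ.filter fun v : Fin n =>
        (Finset.univ.filter fun m : Fin (n-1) => p m = v).card = 2).card = 1) :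
    ∃ (k : ℕ) (A : Finset (Fin (n-1))), k + 3 ≤ n ∧ A ⊆ tailF n k ∧ A.Nonempty ∧
      A ≠ tailF n k ∧ encP n k A = p ∧ encR n k A = r := by
  classical
  -- notation
  set cs : Fin n → ℕ := fun v => (Finset.univ.filter fun m : Fin (n-1) => p m = v).card with hcs
  -- every vertex has degree 0, 1 or 2
  have hdeg : ∀ v : Fin n, cs v = 0 ∨ cs v = 1 ∨ cs v = 2 := by
    intro v
    by_contra hcon
    push_neg at hcon
    obtain ⟨hc0, hc1, hc2⟩ := hcon
    set F0 := Finset.univ.filter fun v : Fin n => cs v = 0 with hF0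
    set F1 := Finset.univ.filter fun v : Fin n => cs v = 1 with hF1
    set F2 := Finset.univ.filter fun v : Fin n => cs v = 2 with hF2
    have hd01 : Disjoint F0 F1 := by
      rw [disjoint_left]; intro a ha hb
      rw [hF0, mem_filter] at ha; rw [hF1, mem_filter] at hb; omega
    have hd012 : Disjoint (F0 ∪ F1) F2 := by
      rw [disjoint_left]; intro a ha hb
      rw [mem_union, hF0, hF1, mem_filter, mem_filter] at ha
      rw [hF2, mem_filter] at hb
      rcases ha with ha | ha <;> omega
    have hcardu : (F0 ∪ F1 ∪ F2).card = n := by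
      rw [card_union_of_disjoint hd012, card_union_of_disjoint hd01, h0, h1, h2]
      omega
    have huniv : F0 ∪ F1 ∪ F2 = Finset.univ := by
      apply Finset.eq_univ_of_card
      rw [hcardu, Fintype.card_fin]
    have hv : v ∈ F0 ∪ F1 ∪ F2 := huniv ▸ mem_univ v
    rw [mem_union, mem_union, hF0, hF1, hF2, mem_filter, mem_filter, mem_filter] at hv
    rcases hv with (hv | hv) | hv <;> tauto
  -- the unique branch vertex b
  obtain ⟨b, hb⟩ := card_eq_one.1 h2
  have hcsb : cs b = 2 := by
    have : b ∈ Finset.univ.filter fun v : Fin n => cs v = 2 := by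
      rw [hb]; exact mem_singleton_self b
    exact (mem_filter.1 this).2
  have hle1 : ∀ v : Fin n, v ≠ b → cs v ≤ 1 := by
    intro v hv
    rcases hdeg v with h | h | h
    · omega
    · omega
    · exfalso
      have : v ∈ Finset.univ.filter fun v : Fin n => cs v = 2 := mem_filter.2 ⟨mem_univ _, h⟩
      rw [hb, mem_singleton] at this
      exact hv this
  have huc : ∀ v : Fin n, v ≠ b → ∀ m m' : Fin (n-1), p m = v → p m' = v → m = m' := by
    intro v hv m m' hm hm'
    exact card_le_one.1 (hle1 v hv) m (mem_filter.2 ⟨mem_univ _, hm⟩)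
      m' (mem_filter.2 ⟨mem_univ _, hm'⟩)
  -- the prefix is a path
  have hpre : ∀ N : ℕ, ∀ m : Fin (n-1), (m : ℕ) = N → (m : ℕ) < (b : ℕ) → (p m : ℕ) = (m : ℕ) := by
    intro N
    induction N using Nat.strong_induction_on with
    | _ N IH =>
      intro m hmN hmb
      by_contra hne
      have hlt : (p m : ℕ) < (m : ℕ) := lt_of_le_of_ne (hp m) hne
      have hvb : p m ≠ b := by
        intro h
        have := congrArg Fin.val h
        omega
      have hvlt : (p m : ℕ) < n - 1 := by have := m.2; omega
      have hvv0 : ((⟨(p m : ℕ), hvlt⟩ : Fin (n-1)) : ℕ) = (p m : ℕ) := rfl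
      have hIH : (p ⟨(p m : ℕ), hvlt⟩ : ℕ) = ((p m : ℕ)) :=
        IH (p m : ℕ) (by omega) ⟨(p m : ℕ), hvlt⟩ rfl (by omega)
      have hchild : p ⟨(p m : ℕ), hvlt⟩ = p m := Fin.ext hIH
      have heq := huc (p m) hvb _ _ hchild rfl
      have hvv : ((⟨(p m : ℕ), hvlt⟩ : Fin (n-1)) : ℕ) = (p m : ℕ) := rfl
      have hveq : ((⟨(p m : ℕ), hvlt⟩ : Fin (n-1)) : ℕ) = (m : ℕ) := congrArg Fin.val heq
      omega
  -- the two children of b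
  have hchb2 : (Finset.univ.filter fun m : Fin (n-1) => p m = b).card = 2 := hcsb
  obtain ⟨c0', c1', hcne', hch'⟩ := card_eq_two.1 hchb2
  have hc0'm : c0' ∈ Finset.univ.filter fun m : Fin (n-1) => p m = b := by
    rw [hch']; exact mem_insert_self _ _
  have hc1'm : c1' ∈ Finset.univ.filter fun m : Fin (n-1) => p m = b := by
    rw [hch']; exact mem_insert_of_mem (mem_singleton_self _)
  have hpc0' : p c0' = b := (mem_filter.1 hc0'm).2
  have hpc1' : p c1' = b := (mem_filter.1 hc1'm).2
  have hbc0' : (b : ℕ) ≤ (c0' : ℕ) := by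
    have := hp c0'; have := congrArg Fin.val hpc0'; omega
  have hbc1' : (b : ℕ) ≤ (c1' : ℕ) := by
    have := hp c1'; have := congrArg Fin.val hpc1'; omega
  have hk3 : (b : ℕ) + 3 ≤ n := by
    have hvne : (c0' : ℕ) ≠ (c1' : ℕ) := fun h => hcne' (Fin.ext h)
    have := c0'.2; have := c1'.2
    omega
  -- rank facts
  have hrlt : ∀ m : Fin (n-1), (r m : ℕ) < cs (p m) := by
    intro m
    have hmem : (r m : ℕ) ∈ (Finset.univ.filter fun m' : Fin (n-1) => p m' = p m).image
        (fun m' => (r m' : ℕ)) := mem_image_of_mem _ (mem_filter.2 ⟨mem_univ _, rfl⟩)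
    rw [hr] at hmem
    exact mem_range.1 hmem
  have hr0 : ∀ m : Fin (n-1), p m ≠ b → (r m : ℕ) = 0 := by
    intro m hm
    have := hrlt m
    have := hle1 _ hm
    omega
  -- ranks of children of b are {0,1}; choose c0, c1 accordingly
  have hrb := hr b
  rw [hch', image_insert, image_singleton, card_insert_of_notMem (by simpa using hcne'),
    card_singleton] at hrb
  have hr01 : ((r c0' : ℕ) = 0 ∧ (r c1' : ℕ) = 1) ∨ ((r c0' : ℕ) = 1 ∧ (r c1' : ℕ) = 0) := by
    have h0m : (0 : ℕ) ∈ ({(r c0' : ℕ), (r c1' : ℕ)} : Finset ℕ) := by rw [hrb]; simp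
    have h1m : (1 : ℕ) ∈ ({(r c0' : ℕ), (r c1' : ℕ)} : Finset ℕ) := by rw [hrb]; simp
    simp only [mem_insert, mem_singleton] at h0m h1m
    omega
  obtain ⟨c0, c1, hpc0, hpc1, hrc0, hrc1, hcc, hchset⟩ :
      ∃ c0 c1 : Fin (n-1), p c0 = b ∧ p c1 = b ∧ (r c0 : ℕ) = 0 ∧ (r c1 : ℕ) = 1 ∧ c0 ≠ c1 ∧
        (Finset.univ.filter fun m : Fin (n-1) => p m = b) = {c0, c1} := by
    rcases hr01 with ⟨ha, hb'⟩ | ⟨ha, hb'⟩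
    · exact ⟨c0', c1', hpc0', hpc1', ha, hb', hcne', hch'⟩
    · exact ⟨c1', c0', hpc1', hpc0', hb', ha, hcne'.symm, by rw [hch', pair_comm]⟩
  have hbc0 : (b : ℕ) ≤ (c0 : ℕ) := by
    have := hp c0; have := congrArg Fin.val hpc0; omega
  have hbc1 : (b : ℕ) ≤ (c1 : ℕ) := by
    have := hp c1; have := congrArg Fin.val hpc1; omega
  have hchb : ∀ m : Fin (n-1), p m = b ↔ (m = c0 ∨ m = c1) := by
    intro m
    constructor
    · intro h
      have : m ∈ Finset.univ.filter fun m : Fin (n-1) => p m = b :=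
        mem_filter.2 ⟨mem_univ _, h⟩
      rw [hchset] at this
      simpa using this
    · rintro (rfl | rfl) <;> assumption
  -- parents of tail vertices are in the tail
  have htail : ∀ m : Fin (n-1), (b : ℕ) ≤ (m : ℕ) → (b : ℕ) ≤ (p m : ℕ) := by
    intro m hm
    by_contra hcon
    push_neg at hcon
    have hplt : (p m : ℕ) < n - 1 := by have := m.2; have := hp m; omega
    have hvv0 : ((⟨(p m : ℕ), hplt⟩ : Fin (n-1)) : ℕ) = (p m : ℕ) := rfl
    have hIH : (p ⟨(p m : ℕ), hplt⟩ : ℕ) = ((p m : ℕ)) := hpre _ _ rfl (by omega)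
    have hchild : p ⟨(p m : ℕ), hplt⟩ = p m := Fin.ext hIH
    have hvb : p m ≠ b := by
      intro h; have := congrArg Fin.val h; omega
    have heq := huc (p m) hvb _ _ hchild rfl
    have hvv : ((⟨(p m : ℕ), hplt⟩ : Fin (n-1)) : ℕ) = (p m : ℕ) := rfl
    have hveq : ((⟨(p m : ℕ), hplt⟩ : Fin (n-1)) : ℕ) = (m : ℕ) := congrArg Fin.val heq
    omega
  -- colA facts
  have hstep : ∀ m : Fin (n-1), (b : ℕ) ≤ (m : ℕ) → p m ≠ b →
      colA n p r (b : ℕ) (m : ℕ) = colA n p r (b : ℕ) ((p m : ℕ) - 1) ∧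
      (b : ℕ) ≤ (p m : ℕ) - 1 ∧ (p m : ℕ) - 1 < (m : ℕ) ∧ (p m : ℕ) - 1 < n - 1 ∧
      (b : ℕ) + 1 ≤ (p m : ℕ) := by
    intro m hm hne
    have hvne : (p m : ℕ) ≠ (b : ℕ) := fun h => hne (Fin.ext h)
    have hge := htail m hm
    have hle := hp m
    have hm2 := m.2
    exact ⟨colA_step p r (b : ℕ) m hvne (by omega) hle, by omega, by omega, by omega, by omega⟩
  have hcol01 : ∀ N : ℕ, ∀ m : Fin (n-1), (m : ℕ) = N → (b : ℕ) ≤ (m : ℕ) →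
      colA n p r (b : ℕ) (m : ℕ) = 0 ∨ colA n p r (b : ℕ) (m : ℕ) = 1 := by
    intro N
    induction N using Nat.strong_induction_on with
    | _ N IH =>
      intro m hmN hbm
      by_cases hmb : p m = b
      · rw [colA_base p r _ m (congrArg Fin.val hmb)]
        rcases (hchb m).1 hmb with rfl | rfl
        · left; exact hrc0
        · right; exact hrc1
      · obtain ⟨he, hb1, hb2, hb3, hb4⟩ := hstep m hbm hmb
        rw [he]
        exact IH ((p m : ℕ) - 1) (by omega) ⟨(p m : ℕ) - 1, hb3⟩ rfl hb1
  -- the chain A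
  set A : Finset (Fin (n-1)) :=
    Finset.univ.filter (fun m : Fin (n-1) => (b : ℕ) ≤ (m : ℕ) ∧ colA n p r (b : ℕ) (m : ℕ) = 0)
    with hAdef
  have hmemA : ∀ m : Fin (n-1), m ∈ A ↔ (b : ℕ) ≤ (m : ℕ) ∧ colA n p r (b : ℕ) (m : ℕ) = 0 := by
    intro m
    rw [hAdef, mem_filter]
    exact ⟨fun h => h.2, fun h => ⟨mem_univ _, h⟩⟩
  have hmemB : ∀ m : Fin (n-1), m ∈ tailF n (b : ℕ) \ A ↔
      (b : ℕ) ≤ (m : ℕ) ∧ colA n p r (b : ℕ) (m : ℕ) = 1 := by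
    intro m
    rw [mem_sdiff, hmemA, mem_tailF]
    constructor
    · rintro ⟨hm, hm2⟩
      rcases hcol01 (m : ℕ) m rfl hm with h | h
      · exact absurd ⟨hm, h⟩ hm2
      · exact ⟨hm, h⟩
    · rintro ⟨hm, hm2⟩
      exact ⟨hm, fun h => by omega⟩
  have hAsub : A ⊆ tailF n (b : ℕ) := by
    intro m hm; exact mem_tailF.2 ((hmemA m).1 hm).1
  have hc0A : c0 ∈ A := (hmemA c0).2 ⟨hbc0, by
    rw [colA_base p r _ c0 (congrArg Fin.val hpc0)]; exact hrc0⟩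
  have hc1B : c1 ∈ tailF n (b : ℕ) \ A := (hmemB c1).2 ⟨hbc1, by
    rw [colA_base p r _ c1 (congrArg Fin.val hpc1)]; exact hrc1⟩
  have hApne : ∀ m ∈ A, m ≠ c0 → p m ≠ b := by
    intro m hm hmc0 hpb
    rcases (hchb m).1 hpb with h | h
    · exact hmc0 h
    · have hcol := ((hmemA m).1 hm).2
      have hcb := colA_base p r (b : ℕ) m (congrArg Fin.val hpb)
      have hrm : (r m : ℕ) = 1 := by rw [h]; exact hrc1
      omega
  have hBpne : ∀ m ∈ tailF n (b : ℕ) \ A, m ≠ c1 → p m ≠ b := by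
    intro m hm hmc1 hpb
    rcases (hchb m).1 hpb with h | h
    · have hcol := ((hmemB m).1 hm).2
      have hcb := colA_base p r (b : ℕ) m (congrArg Fin.val hpb)
      have hrm : (r m : ℕ) = 0 := by rw [h]; exact hrc0
      omega
    · exact hmc1 h
  -- the parent-step function
  set f : Fin (n-1) → Fin (n-1) :=
    fun m => ⟨min ((p m : ℕ) - 1) (m : ℕ), by have := m.2; omega⟩ with hfdef
  have hfval : ∀ m : Fin (n-1), (f m : ℕ) = (p m : ℕ) - 1 := by
    intro m
    have := hp m
    show min ((p m : ℕ) - 1) (m : ℕ) = (p m : ℕ) - 1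
    omega
  -- chain hypotheses for A
  have hfA : ∀ a ∈ A, a ≠ c0 → f a ∈ A ∧ f a < a := by
    intro a ha hac0
    obtain ⟨hba, hcola⟩ := (hmemA a).1 ha
    have hpne := hApne a ha hac0
    obtain ⟨he, hb1, hb2, hb3, hb4⟩ := hstep a hba hpne
    constructor
    · refine (hmemA (f a)).2 ⟨by rw [hfval]; omega, ?_⟩
      rw [hfval]
      rw [← he]
      exact hcola
    · rw [Fin.lt_def, hfval]
      omega
  have hinjA : ∀ a ∈ A, ∀ a' ∈ A, a ≠ c0 → a' ≠ c0 → f a = f a' → a = a' := by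
    intro a ha a' ha' hac0 ha'c0 hfaa
    have hv := congrArg Fin.val hfaa
    rw [hfval, hfval] at hv
    obtain ⟨-, hb1, -, -, hb4⟩ := hstep a ((hmemA a).1 ha).1 (hApne a ha hac0)
    obtain ⟨-, hb1', -, -, hb4'⟩ := hstep a' ((hmemA a').1 ha').1 (hApne a' ha' ha'c0)
    have hpp : p a = p a' := Fin.ext (by omega)
    exact huc (p a) (hApne a ha hac0) a a' rfl (by rw [hpp])
  have hchainA := chain_struct A c0 hc0A f hfA hinjA
  have hminA := chain_min A c0 hc0A f hfA
  -- chain hypotheses for B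
  have hfB : ∀ a ∈ tailF n (b : ℕ) \ A, a ≠ c1 → f a ∈ tailF n (b : ℕ) \ A ∧ f a < a := by
    intro a ha hac1
    obtain ⟨hba, hcola⟩ := (hmemB a).1 ha
    have hpne := hBpne a ha hac1
    obtain ⟨he, hb1, hb2, hb3, hb4⟩ := hstep a hba hpne
    constructor
    · refine (hmemB (f a)).2 ⟨by rw [hfval]; omega, ?_⟩
      rw [hfval, ← he]
      exact hcola
    · rw [Fin.lt_def, hfval]
      omega
  have hinjB : ∀ a ∈ tailF n (b : ℕ) \ A, ∀ a' ∈ tailF n (b : ℕ) \ A,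
      a ≠ c1 → a' ≠ c1 → f a = f a' → a = a' := by
    intro a ha a' ha' hac1 ha'c1 hfaa
    have hv := congrArg Fin.val hfaa
    rw [hfval, hfval] at hv
    obtain ⟨-, hb1, -, -, hb4⟩ := hstep a ((hmemB a).1 ha).1 (hBpne a ha hac1)
    obtain ⟨-, hb1', -, -, hb4'⟩ := hstep a' ((hmemB a').1 ha').1 (hBpne a' ha' ha'c1)
    have hpp : p a = p a' := Fin.ext (by omega)
    exact huc (p a) (hBpne a ha hac1) a a' rfl (by rw [hpp])
  have hchainB := chain_struct (tailF n (b : ℕ) \ A) c1 hc1B f hfB hinjB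
  have hminB := chain_min (tailF n (b : ℕ) \ A) c1 hc1B f hfB
  -- conclude
  refine ⟨(b : ℕ), A, hk3, hAsub, ⟨c0, hc0A⟩, ?_, ?_, ?_⟩
  · intro h
    rw [h] at hc1B
    exact (mem_sdiff.1 hc1B).2 (mem_sdiff.1 hc1B).1
  · -- encP = p
    funext m
    apply Fin.ext
    by_cases hmb : (m : ℕ) < (b : ℕ)
    · rw [encP_val_lt hmb, hpre (m : ℕ) m rfl hmb]
    · push_neg at hmb
      rcases tailF_split (A := A) hmb with hmA | hmB
      · have hco : chainOf n (b : ℕ) A m = A := chainOf_eq_of_mem (Or.inl rfl) hmA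
        by_cases hmc : m = c0
        · subst hmc
          have hfe : ¬ ((chainOf n (b : ℕ) A m).filter (· < m)).Nonempty := by
            rw [hco]
            rintro ⟨x, hx⟩
            obtain ⟨hx1, hx2⟩ := mem_filter.1 hx
            exact absurd (hminA x hx1) (not_le.2 hx2)
          rw [encP_val_emp (by omega) (not_lt.2 hmb) hfe]
          exact (congrArg Fin.val hpc0).symm
        · obtain ⟨hne', hfeq⟩ := hchainA m hmA hmc
          have hne2 : ((chainOf n (b : ℕ) A m).filter (· < m)).Nonempty := by
            rw [hco]; exact hne'
          rw [encP_val_max (not_lt.2 hmb) hne2]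
          have hmax : ((chainOf n (b : ℕ) A m).filter (· < m)).max' hne2 =
              (A.filter (· < m)).max' hne' := max'_congr (by rw [hco]) _ _
          rw [hmax, ← hfeq, hfval]
          obtain ⟨-, hb1, -, -, hb4⟩ := hstep m hmb (hApne m hmA hmc)
          omega
      · have hco : chainOf n (b : ℕ) A m = tailF n (b : ℕ) \ A :=
          chainOf_eq_of_mem (Or.inr rfl) hmB
        by_cases hmc : m = c1
        · subst hmc
          have hfe : ¬ ((chainOf n (b : ℕ) A m).filter (· < m)).Nonempty := by
            rw [hco]
            rintro ⟨x, hx⟩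
            obtain ⟨hx1, hx2⟩ := mem_filter.1 hx
            exact absurd (hminB x hx1) (not_le.2 hx2)
          rw [encP_val_emp (by omega) (not_lt.2 hmb) hfe]
          exact (congrArg Fin.val hpc1).symm
        · obtain ⟨hne', hfeq⟩ := hchainB m hmB hmc
          have hne2 : ((chainOf n (b : ℕ) A m).filter (· < m)).Nonempty := by
            rw [hco]; exact hne'
          rw [encP_val_max (not_lt.2 hmb) hne2]
          have hmax : ((chainOf n (b : ℕ) A m).filter (· < m)).max' hne2 =
              ((tailF n (b : ℕ) \ A).filter (· < m)).max' hne' := max'_congr (by rw [hco]) _ _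
          rw [hmax, ← hfeq, hfval]
          obtain ⟨-, hb1, -, -, hb4⟩ := hstep m hmb (hBpne m hmB hmc)
          omega
  · -- encR = r
    funext m
    apply Fin.ext
    by_cases hmb : (m : ℕ) < (b : ℕ)
    · rw [encR_val_zero (by rintro ⟨-, h2', -⟩; omega)]
      have hpmb : p m ≠ b := by
        intro h
        have := congrArg Fin.val h
        have := hpre (m : ℕ) m rfl hmb
        omega
      rw [hr0 m hpmb]
    · push_neg at hmb
      rcases tailF_split (A := A) hmb with hmA | hmB
      · rw [encR_val_zero (by rintro ⟨h1', -⟩; exact h1' hmA)]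
        by_cases hmc : m = c0
        · subst hmc; rw [hrc0]
        · rw [hr0 m (hApne m hmA hmc)]
      · by_cases hmc : m = c1
        · subst hmc
          have hfe : (tailF n (b : ℕ) \ A).filter (· < m) = ∅ := by
            rw [filter_eq_empty_iff]
            intro x hx
            exact not_lt.2 (hminB x hx)
          rw [encR_val_one (by omega) (mem_sdiff.1 hmB).2 hmb hfe, hrc1]
        · obtain ⟨hne', -⟩ := hchainB m hmB hmc
          rw [encR_val_zero (by
            rintro ⟨-, -, h3'⟩
            rw [h3'] at hne'
            simp at hne')]
          rw [hr0 m (hBpne m hmB hmc)]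

lemma enc_inj_helper (n k : ℕ) (A A' : Finset (Fin (n-1)))
    (hk : k + 3 ≤ n) (hA : A ⊆ tailF n k) (hA' : A' ⊆ tailF n k)
    (hP : encP n k A = encP n k A') (hR : encR n k A = encR n k A')
    (m : Fin (n-1)) (hmA : m ∈ A) (hmA' : m ∉ A')
    (hlt : ∀ x : Fin (n-1), x < m → (x ∈ A ↔ x ∈ A')) : False := by
  have hmt : k ≤ (m : ℕ) := mem_tailF.1 (hA hmA)
  have hmB' : m ∈ tailF n k \ A' := mem_sdiff.2 ⟨mem_tailF.2 hmt, hmA'⟩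
  by_cases hBe : (tailF n k \ A').filter (· < m) = ∅
  · have e2 : (encR n k A' m : ℕ) = 1 := encR_val_one (by omega) hmA' hmt hBe
    have e1 : (encR n k A m : ℕ) = 0 := encR_val_zero (by rintro ⟨h1, -⟩; exact h1 hmA)
    rw [hR] at e1
    omega
  · have hne' : ((tailF n k \ A').filter (· < m)).Nonempty := nonempty_iff_ne_empty.2 hBe
    have hco' : chainOf n k A' m = tailF n k \ A' := chainOf_eq_of_mem (Or.inr rfl) hmB'
    have hne2 : ((chainOf n k A' m).filter (· < m)).Nonempty := by rw [hco']; exact hne'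
    have e2 := encP_val_max (A := A') (not_lt.2 hmt) hne2
    have hw2m := mem_filter.1 (((chainOf n k A' m).filter (· < m)).max'_mem hne2)
    have hw2sub : chainOf n k A' m ⊆ tailF n k \ A' := by rw [hco']
    have hw2B : ((chainOf n k A' m).filter (· < m)).max' hne2 ∈ tailF n k \ A' :=
      hw2sub hw2m.1
    have hco : chainOf n k A m = A := chainOf_eq_of_mem (Or.inl rfl) hmA
    by_cases hAe : (A.filter (· < m)).Nonempty
    · have hne1 : ((chainOf n k A m).filter (· < m)).Nonempty := by rw [hco]; exact hAe
      have e1 := encP_val_max (A := A) (not_lt.2 hmt) hne1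
      have hw1m := mem_filter.1 (((chainOf n k A m).filter (· < m)).max'_mem hne1)
      have hw1sub : chainOf n k A m ⊆ A := by rw [hco]
      have hw1A : ((chainOf n k A m).filter (· < m)).max' hne1 ∈ A := hw1sub hw1m.1
      have hveq : (((chainOf n k A m).filter (· < m)).max' hne1 : ℕ) =
          (((chainOf n k A' m).filter (· < m)).max' hne2 : ℕ) := by
        rw [hP] at e1
        omega
      have hfeq : ((chainOf n k A m).filter (· < m)).max' hne1 =
          ((chainOf n k A' m).filter (· < m)).max' hne2 := Fin.ext hveq
      have hw1A' : ((chainOf n k A m).filter (· < m)).max' hne1 ∈ A' :=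
        (hlt _ hw1m.2).1 hw1A
      rw [hfeq] at hw1A'
      exact (mem_sdiff.1 hw2B).2 hw1A'
    · have hne1 : ¬ ((chainOf n k A m).filter (· < m)).Nonempty := by rw [hco]; exact hAe
      have e1 := encP_val_emp (A := A) (by omega) (not_lt.2 hmt) hne1
      rw [hP] at e1
      have := mem_tailF.1 (mem_sdiff.1 hw2B).1
      omega

lemma tailF_card (n k : ℕ) : (tailF n k).card = n - 1 - k := by
  have himg : (tailF n k).image Fin.val = Finset.Ico k (n-1) := by
    ext j
    simp only [mem_image, mem_Ico, tailF, mem_filter, mem_univ, true_and]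
    constructor
    · rintro ⟨m, hm, rfl⟩
      exact ⟨hm, m.2⟩
    · rintro ⟨h1, h2⟩
      exact ⟨⟨j, h2⟩, h1, rfl⟩
  have hinj := Finset.card_image_of_injective (tailF n k) (Fin.val_injective)
  rw [himg, Nat.card_Ico] at hinj
  omega

end Enc

/-- For `n ≥ 3`, the number of increasing plane trees on `{1,…,n}` with exactly `2` leaves,
`n−3` vertices of degree `1` and one vertex of degree `2` equals `2ⁿ − 2n`. -/
theorem stmt14 (n : ℕ) (hn : 3 ≤ n) :
    ((planeTrees n).filter fun pr =>
        degCount pr 0 = 2 ∧ degCount pr 1 = n - 3 ∧ degCount pr 2 = 1).card =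
      2 ^ n - 2 * n := by
  classical
  set P : Finset (ℕ × Finset (Fin (n - 1))) :=
    (Finset.range n ×ˢ Finset.univ).filter
      (fun x => x.1 + 3 ≤ n ∧ x.2 ⊆ tailF n x.1 ∧ x.2.Nonempty ∧ x.2 ≠ tailF n x.1) with hPdef
  have hmemP : ∀ x : ℕ × Finset (Fin (n-1)), x ∈ P ↔
      x.1 + 3 ≤ n ∧ x.2 ⊆ tailF n x.1 ∧ x.2.Nonempty ∧ x.2 ≠ tailF n x.1 := by
    intro x
    rw [hPdef, mem_filter, mem_product]
    constructor
    · exact fun h => h.2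
    · intro h
      exact ⟨⟨mem_range.2 (by omega), mem_univ _⟩, h⟩
  have hBne : ∀ x ∈ P, (tailF n x.1 \ x.2).Nonempty := by
    intro x hx
    obtain ⟨h1, h2, h3, h4⟩ := (hmemP x).1 hx
    rw [sdiff_nonempty]
    intro hsub
    exact h4 (Finset.Subset.antisymm h2 hsub)
  have hbij : P.card = ((planeTrees n).filter fun pr =>
      degCount pr 0 = 2 ∧ degCount pr 1 = n - 3 ∧ degCount pr 2 = 1).card := by
    apply Finset.card_bij (fun (a : ℕ × Finset (Fin (n-1))) (_ : a ∈ P) =>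
      (encP n a.1 a.2, encR n a.1 a.2))
    · intro a ha
      obtain ⟨h1, h2, h3, h4⟩ := (hmemP a).1 ha
      exact enc_mem h1 h2 h3 (hBne a ha)
    · intro a ha a' ha' heq
      obtain ⟨h1, h2, h3, h4⟩ := (hmemP a).1 ha
      obtain ⟨h1', h2', h3', h4'⟩ := (hmemP a').1 ha'
      have hPeq : encP n a.1 a.2 = encP n a'.1 a'.2 := congrArg Prod.fst heq
      have hReq : encR n a.1 a.2 = encR n a'.1 a'.2 := congrArg Prod.snd heq
      have hd1 := enc_deg2set h1 h2 h3 (hBne a ha)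
      have hd2 := enc_deg2set h1' h2' h3' (hBne a' ha')
      rw [hPeq, hd2] at hd1
      have hkeq : a'.1 = a.1 := by
        have hmm := hd1 ▸ mem_singleton_self (⟨a'.1, by omega⟩ : Fin n)
        rw [mem_singleton, Fin.mk.injEq] at hmm
        exact hmm
      rw [hkeq] at hPeq hReq h2' h4'
      have hA2 : a.2 = a'.2 := by
        by_contra hAA
        have hDne : ((a.2 \ a'.2) ∪ (a'.2 \ a.2)).Nonempty := by
          by_contra hcon
          rw [not_nonempty_iff_eq_empty, union_eq_empty] at hcon
          obtain ⟨hc1, hc2⟩ := hcon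
          exact hAA (Finset.Subset.antisymm (sdiff_eq_empty_iff_subset.1 hc1)
            (sdiff_eq_empty_iff_subset.1 hc2))
        set m := ((a.2 \ a'.2) ∪ (a'.2 \ a.2)).min' hDne with hmdef
        have hmmem : m ∈ (a.2 \ a'.2) ∪ (a'.2 \ a.2) := min'_mem _ hDne
        have hltm : ∀ x : Fin (n-1), x < m → (x ∈ a.2 ↔ x ∈ a'.2) := by
          intro x hx
          by_contra hiff
          have hxD : x ∈ (a.2 \ a'.2) ∪ (a'.2 \ a.2) := by
            rw [mem_union, mem_sdiff, mem_sdiff]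
            tauto
          have hle := min'_le _ x hxD
          rw [← hmdef] at hle
          exact absurd hx (not_lt.2 hle)
        rw [mem_union, mem_sdiff, mem_sdiff] at hmmem
        rcases hmmem with ⟨hm1, hm2⟩ | ⟨hm1, hm2⟩
        · exact enc_inj_helper n a.1 a.2 a'.2 h1 h2 h2' hPeq hReq m hm1 hm2 hltm
        · exact enc_inj_helper n a.1 a'.2 a.2 h1 h2' h2 hPeq.symm hReq.symm m hm1 hm2
            (fun x hx => (hltm x hx).symm)
      have : a = a' := by
        rw [Prod.ext_iff]
        exact ⟨hkeq.symm, hA2⟩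
      exact this
    · intro pr hpr
      rw [mem_filter] at hpr
      obtain ⟨hpt, hd0, hd1, hd2⟩ := hpr
      rw [planeTrees, mem_filter] at hpt
      obtain ⟨-, hp, hr⟩ := hpt
      obtain ⟨k, A, hk, hA, hAne, hAneq, hPe, hRe⟩ := tree_surj n hn pr.1 pr.2 hp hr hd0 hd1 hd2
      refine ⟨(k, A), (hmemP (k, A)).2 ⟨hk, hA, hAne, hAneq⟩, ?_⟩
      rw [hPe, hRe]
  have hPcard : P.card = 2 ^ n - 2 * n := by
    have hPsplit : P = (Finset.range (n-2)).biUnion (fun k => ({k} : Finset ℕ) ×ˢ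
        ((tailF n k).powerset.filter (fun A => A.Nonempty ∧ A ≠ tailF n k))) := by
      ext x
      rw [hmemP x, mem_biUnion]
      constructor
      · rintro ⟨h1, h2, h3, h4⟩
        refine ⟨x.1, mem_range.2 (by omega), ?_⟩
        rw [mem_product, mem_singleton, mem_filter, mem_powerset]
        exact ⟨rfl, h2, h3, h4⟩
      · rintro ⟨kk, hkk, hx⟩
        rw [mem_range] at hkk
        rw [mem_product, mem_singleton, mem_filter, mem_powerset] at hx
        obtain ⟨hx1, hx2, hx3, hx4⟩ := hx
        exact ⟨by omega, by rw [hx1]; exact hx2, hx3, by rw [hx1]; exact hx4⟩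
    have hdisj : ∀ k ∈ Finset.range (n-2), ∀ k' ∈ Finset.range (n-2), k ≠ k' →
        Disjoint (({k} : Finset ℕ) ×ˢ
          ((tailF n k).powerset.filter (fun A => A.Nonempty ∧ A ≠ tailF n k)))
        (({k'} : Finset ℕ) ×ˢ
          ((tailF n k').powerset.filter (fun A => A.Nonempty ∧ A ≠ tailF n k'))) := by
      intro k hk1 k' hk2 hne
      rw [disjoint_left]
      intro x hx1 hx2
      rw [mem_product, mem_singleton] at hx1 hx2
      exact hne (by rw [← hx1.1, hx2.1])
    rw [hPsplit, Finset.card_biUnion hdisj]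
    have hterm : ∀ k ∈ Finset.range (n-2), (({k} : Finset ℕ) ×ˢ
        ((tailF n k).powerset.filter (fun A => A.Nonempty ∧ A ≠ tailF n k))).card =
        2 ^ (n-1-k) - 2 := by
      intro k hkk
      rw [mem_range] at hkk
      rw [card_product, card_singleton, one_mul]
      have hq : (tailF n k).powerset.filter (fun A => A.Nonempty ∧ A ≠ tailF n k) =
          (tailF n k).powerset \ {∅, tailF n k} := by
        ext S
        simp only [mem_filter, mem_sdiff, mem_powerset, mem_insert, mem_singleton,
          nonempty_iff_ne_empty]
        tauto
      have hsub : ({∅, tailF n k} : Finset (Finset (Fin (n-1)))) ⊆ (tailF n k).powerset := by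
        intro S hS
        rw [mem_insert, mem_singleton] at hS
        rcases hS with rfl | rfl
        · exact empty_mem_powerset _
        · exact mem_powerset_self _
      rw [hq, card_sdiff_of_subset hsub, card_powerset, tailF_card]
      have hc2 : ({∅, tailF n k} : Finset (Finset (Fin (n-1)))).card = 2 := by
        rw [card_insert_of_notMem, card_singleton]
        rw [mem_singleton]
        intro hc
        have hkn : k < n - 1 := by omega
        have hmm : (⟨k, hkn⟩ : Fin (n-1)) ∈ tailF n k := mem_tailF.2 (le_refl k)
        rw [← hc] at hmm
        simp at hmm
      rw [hc2]
    rw [Finset.sum_congr rfl hterm]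
    have hre := Finset.sum_range_reflect (fun k => 2 ^ (n-1-k) - 2) (n-2)
    rw [← hre]
    have hcongr : ∀ j ∈ Finset.range (n-2), 2 ^ (n-1-(n-2-1-j)) - 2 = 2 ^ (j+2) - 2 := by
      intro j hj
      rw [mem_range] at hj
      have hexp : n-1-(n-2-1-j) = j+2 := by omega
      rw [hexp]
    rw [Finset.sum_congr rfl hcongr]
    obtain ⟨hb1, hb2⟩ := sum_pow_aux (n-2)
    rw [hb2]
    have hnn : n - 2 + 2 = n := by omega
    rw [hnn] at hb1 ⊢
    omega
  rw [← hbij, hPcard]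
end
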